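/- arXiv:2401.08437 — 2 statements merged into one kernel-verified Lean document; each statement's English description precedes it below -/
import Mathlib

section
/- Let λ ∈ ℤ^D \ {0} and let (φ, ψ) be a λ-mode wave solution on (0, t_{λ*}]. Then there exist real numbers ψ_∞ and φ̃_∞ such that ψ(t) → ψ_∞ and φ̃(t) → φ̃_∞ as t → 0⁺, and there is C > 0 depending only on D and p_1,…,p_D with |ψ(t) − ψ_∞| + |φ̃(t) − φ̃_∞| ≤ C·τ_λ(t)²·(1 + log(t_{λ*}/t)²)·E_{λ,low}(t_{λ*})^{1/2} ≤ C²·τ_λ(t)·E_{λ,low}(t_{λ*})^{1/2} for all t ∈ (0, t_{λ*}]. Moreover ψ_∞² + φ̃_∞² ≤ C_low·E_{λ,low}(t_{λ*}), where C_low depends only on D and p_1,…,p_D. -/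
open Real Filter MeasureTheory Topology

private lemma poly_le_exp {c : ℝ} (hc : 0 < c) :
    ∃ M : ℝ, 1 ≤ M ∧ ∀ x : ℝ, 0 ≤ x → (1 + x) ^ 2 ≤ M * Real.exp (c * x) := by
  refine ⟨max 1 ((2 / min c 2) ^ 2), le_max_left _ _, fun x hx => ?_⟩
  set c' := min c 2 with hc'def
  have hc'0 : 0 < c' := lt_min hc two_pos
  have hc'2 : c' ≤ 2 := min_le_right _ _
  have hc'c : c' ≤ c := min_le_left _ _
  have h2c : 1 ≤ 2 / c' := (one_le_div hc'0).2 hc'2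
  have h1 : 1 + x ≤ (2 / c') * (1 + (c' / 2) * x) := by
    rw [mul_add, mul_one]
    have he : (2 / c') * ((c' / 2) * x) = x := by field_simp
    rw [he]
    linarith
  have h2 : 1 + (c' / 2) * x ≤ Real.exp ((c' / 2) * x) := by
    have := Real.add_one_le_exp ((c' / 2) * x); linarith
  have h3 : 1 + x ≤ (2 / c') * Real.exp ((c' / 2) * x) := by
    refine h1.trans (mul_le_mul_of_nonneg_left h2 (by positivity))
  have h4 : (1 + x) ^ 2 ≤ ((2 / c') * Real.exp ((c' / 2) * x)) ^ 2 :=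
    pow_le_pow_left₀ (by linarith) h3 2
  calc (1 + x) ^ 2 ≤ ((2 / c') * Real.exp ((c' / 2) * x)) ^ 2 := h4
    _ = (2 / c') ^ 2 * Real.exp (c' * x) := by
        rw [mul_pow, sq (Real.exp _), ← Real.exp_add]; ring_nf
    _ ≤ max 1 ((2 / min c 2) ^ 2) * Real.exp (c * x) := by
        refine mul_le_mul (le_max_right _ _) (Real.exp_le_exp.2 ?_) (Real.exp_nonneg _)
          (le_max_of_le_right (by positivity))
        exact mul_le_mul_of_nonneg_right hc'c hx

private lemma rpow_combine {x y c d : ℝ} (hx : 0 < x) (hy : 0 < y) :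
    (x / y) ^ c * (y / x) ^ d = (x / y) ^ (c - d) := by
  have h1 : (y / x) ^ d = (x / y) ^ (-d) := by
    rw [Real.rpow_neg (div_pos hx hy).le, ← Real.inv_rpow (div_pos hx hy).le, inv_div]
  rw [h1, ← Real.rpow_add (div_pos hx hy), sub_eq_add_neg]

private lemma div_rpow_div {u t c : ℝ} (hu : 0 < u) (ht : 0 < t) :
    (u / t) ^ c / u = t ^ (-c) * u ^ (c - 1) := by
  rw [Real.div_rpow hu.le ht.le, Real.rpow_neg ht.le, Real.rpow_sub_one hu.ne']
  ring

private lemma gronwall_aux {E Ed g : ℝ → ℝ} {t₀ t₁ : ℝ} (h01 : t₀ ≤ t₁)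
    (hsub : Set.Icc t₀ t₁ ⊆ Set.Ioi (0:ℝ))
    (hE : ∀ u ∈ Set.Icc t₀ t₁, HasDerivAt E (Ed u) u)
    (hg : ContinuousOn g (Set.Ioi 0))
    (hbound : ∀ u ∈ Set.Icc t₀ t₁, |Ed u| ≤ g u * E u) :
    E t₀ ≤ E t₁ * Real.exp (∫ x in t₀..t₁, g x) := by
  set I : ℝ → ℝ := fun u => ∫ x in t₀..u, g x with hIdef
  have hI : ∀ u ∈ Set.Icc t₀ t₁, HasDerivAt I (g u) u := by
    intro u hu
    have hint : IntervalIntegrable g volume t₀ u := by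
      apply ContinuousOn.intervalIntegrable
      apply hg.mono
      intro x hx
      exact hsub ⟨(Set.mem_uIcc.1 hx).elim (fun h => h.1) (fun h => le_trans hu.1 h.1),
        (Set.mem_uIcc.1 hx).elim (fun h => le_trans h.2 hu.2) (fun h => le_trans h.2 h01)⟩
    exact intervalIntegral.integral_hasDerivAt_right hint
      (hg.stronglyMeasurableAtFilter isOpen_Ioi _ (hsub hu))
      (hg.continuousAt (isOpen_Ioi.mem_nhds (hsub hu)))
  set F : ℝ → ℝ := fun u => E u * Real.exp (I u) with hFdef
  have hF : ∀ u ∈ Set.Icc t₀ t₁, HasDerivAt F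
      (Ed u * Real.exp (I u) + E u * (Real.exp (I u) * g u)) u := by
    intro u hu
    exact (hE u hu).mul ((hI u hu).exp)
  have hmono : MonotoneOn F (Set.Icc t₀ t₁) := by
    apply monotoneOn_of_deriv_nonneg (convex_Icc _ _)
    · exact fun u hu => (hF u hu).continuousAt.continuousWithinAt
    · intro u hu
      rw [interior_Icc] at hu
      exact (hF u (Set.Ioo_subset_Icc_self hu)).differentiableAt.differentiableWithinAt
    · intro u hu
      rw [interior_Icc] at hu
      have hu' := Set.Ioo_subset_Icc_self hu
      rw [(hF u hu').deriv]
      have h1 : -(g u * E u) ≤ Ed u := neg_le_of_abs_le (hbound u hu')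
      have h2 : (0:ℝ) ≤ g u * E u := le_trans (abs_nonneg _) (hbound u hu')
      have h3 : (0:ℝ) < Real.exp (I u) := Real.exp_pos _
      nlinarith
  have := hmono (Set.left_mem_Icc.2 h01) (Set.right_mem_Icc.2 h01) h01
  simpa [hFdef, hIdef, intervalIntegral.integral_same] using this

private lemma rate_aux {f fd r : ℝ → ℝ} {tstar Q : ℝ} (ht0 : 0 < tstar)
    (hderiv : ∀ u ∈ Set.Ioc (0:ℝ) tstar, HasDerivAt f (fd u) u)
    (hcont : ContinuousOn fd (Set.Ioc 0 tstar))
    (hrint : ∀ t ∈ Set.Ioc (0:ℝ) tstar, IntegrableOn r (Set.Ioc 0 t) volume)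
    (hbd : ∀ u ∈ Set.Ioc (0:ℝ) tstar, |fd u| ≤ Q * r u) :
    ∀ t ∈ Set.Ioc (0:ℝ) tstar,
      |f t - (f tstar - ∫ u in Set.Ioc 0 tstar, fd u)| ≤ Q * ∫ u in Set.Ioc 0 t, r u := by
  have hfd_int : ∀ t ∈ Set.Ioc (0:ℝ) tstar, IntegrableOn fd (Set.Ioc 0 t) volume := by
    intro t ht
    apply Integrable.mono' ((hrint t ht).const_mul Q)
    · exact (hcont.mono (Set.Ioc_subset_Ioc_right ht.2)).aestronglyMeasurable measurableSet_Ioc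
    · refine (ae_restrict_iff' measurableSet_Ioc).2 (ae_of_all _ fun u hu => ?_)
      rw [Real.norm_eq_abs]
      exact hbd u ⟨hu.1, hu.2.trans ht.2⟩
  intro t ht
  have hftc : ∫ u in t..tstar, fd u = f tstar - f t := by
    apply intervalIntegral.integral_eq_sub_of_hasDerivAt
    · intro u hu
      rw [Set.uIcc_of_le ht.2] at hu
      exact hderiv u ⟨lt_of_lt_of_le ht.1 hu.1, hu.2⟩
    · rw [intervalIntegrable_iff_integrableOn_Ioc_of_le ht.2]
      exact (hfd_int tstar ⟨ht0, le_refl _⟩).mono_set (Set.Ioc_subset_Ioc_left ht.1.le)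
  have hsplit : ∫ u in Set.Ioc 0 tstar, fd u =
      (∫ u in Set.Ioc 0 t, fd u) + ∫ u in Set.Ioc t tstar, fd u := by
    rw [← setIntegral_union (Set.Ioc_disjoint_Ioc_of_le le_rfl) measurableSet_Ioc (hfd_int t ht)
      ((hfd_int tstar ⟨ht0, le_refl _⟩).mono_set (Set.Ioc_subset_Ioc_left ht.1.le)),
      Set.Ioc_union_Ioc_eq_Ioc ht.1.le ht.2]
  have heq : f t - (f tstar - ∫ u in Set.Ioc 0 tstar, fd u) = ∫ u in Set.Ioc 0 t, fd u := by
    rw [hsplit]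
    have h2 : ∫ u in Set.Ioc t tstar, fd u = f tstar - f t := by
      rw [← intervalIntegral.integral_of_le ht.2]; exact hftc
    rw [h2]; ring
  rw [heq]
  calc |∫ u in Set.Ioc 0 t, fd u| ≤ ∫ u in Set.Ioc 0 t, |fd u| := by
        simpa [Real.norm_eq_abs] using
          norm_integral_le_integral_norm (μ := volume.restrict (Set.Ioc 0 t)) fd
    _ ≤ ∫ u in Set.Ioc 0 t, Q * r u := by
        refine setIntegral_mono_on (hfd_int t ht).abs ((hrint t ht).const_mul Q)
          measurableSet_Ioc fun u hu => hbd u ⟨hu.1, hu.2.trans ht.2⟩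
    _ = Q * ∫ u in Set.Ioc 0 t, r u := integral_const_mul Q r

private lemma quad_aux {X Y l : ℝ} (hl : 0 ≤ l) :
    2 * ((Y + l * X) * (X + l * Y)) ≤ (1 + l) ^ 2 * (X ^ 2 + Y ^ 2) := by
  nlinarith [sq_nonneg (X - Y), mul_nonneg (mul_nonneg hl hl) (sq_nonneg (X - Y))]
set_option maxHeartbeats 1600000

/-- τ_λ(t) = (∑ᵢ t^(2-2pᵢ) λᵢ²)^(1/2). -/
noncomputable def tau {D : ℕ} (p : Fin D → ℝ) (lam : Fin D → ℤ) (t : ℝ) : ℝ :=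
  Real.sqrt (∑ i, t ^ (2 - 2 * p i) * ((lam i : ℝ)) ^ 2)

/-- A λ-mode wave solution on the set `I`: t φ' = ψ and t ψ' = -τ_λ(t)² φ. -/
def IsWaveSol {D : ℕ} (p : Fin D → ℝ) (lam : Fin D → ℤ) (φ ψ : ℝ → ℝ) (I : Set ℝ) : Prop :=
  ∀ t ∈ I, HasDerivAt φ (ψ t / t) t ∧ HasDerivAt ψ (-(tau p lam t ^ 2) * φ t / t) t

/-- The renormalized field φ̃(t) = φ(t) - ψ(t) log(t/t_{λ*}). -/
noncomputable def phiTilde (φ ψ : ℝ → ℝ) (tstar t : ℝ) : ℝ :=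
  φ t - ψ t * Real.log (t / tstar)

/-- The low-frequency wave energy E_{λ,low}(t) = ψ(t)² + φ̃(t)². -/
noncomputable def Elow (φ ψ : ℝ → ℝ) (tstar t : ℝ) : ℝ :=
  ψ t ^ 2 + phiTilde φ ψ tstar t ^ 2
/-- Proposition `prop:wave_low_freq_scat`(i): existence of limits of ψ and φ̃ at the
singularity, with quantitative rates. -/
theorem wave_low_freq_scattering_limits (D : ℕ) (hD : 2 ≤ D) (p : Fin D → ℝ)
    (hp : ∀ i, p i < 1) :
    ∃ C Clow : ℝ, 0 < C ∧ 0 < Clow ∧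
      ∀ (lam : Fin D → ℤ), lam ≠ 0 →
      ∀ tstar : ℝ, 0 < tstar → tstar ≤ 1 → tau p lam tstar = 1 →
      ∀ φ ψ : ℝ → ℝ, IsWaveSol p lam φ ψ (Set.Ioc 0 tstar) →
        ∃ psiInf phiInf : ℝ,
          Tendsto ψ (𝓝[>] (0:ℝ)) (𝓝 psiInf) ∧
          Tendsto (phiTilde φ ψ tstar) (𝓝[>] (0:ℝ)) (𝓝 phiInf) ∧
          (∀ t ∈ Set.Ioc (0:ℝ) tstar,
            |ψ t - psiInf| + |phiTilde φ ψ tstar t - phiInf| ≤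
              C * (tau p lam t ^ 2 * (1 + Real.log (tstar / t) ^ 2))
                * Real.sqrt (Elow φ ψ tstar tstar) ∧
            C * (tau p lam t ^ 2 * (1 + Real.log (tstar / t) ^ 2))
                * Real.sqrt (Elow φ ψ tstar tstar) ≤
              C ^ 2 * tau p lam t * Real.sqrt (Elow φ ψ tstar tstar)) ∧
          psiInf ^ 2 + phiInf ^ 2 ≤ Clow * Elow φ ψ tstar tstar := by
  classical
  have hne : (Finset.univ : Finset (Fin D)).Nonempty :=
    ⟨⟨0, by omega⟩, Finset.mem_univ _⟩
  obtain ⟨a, hadef⟩ : ∃ x : ℝ, x = 2 - 2 * Finset.univ.sup' hne p := ⟨_, rfl⟩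
  have hpm1 : Finset.univ.sup' hne p < 1 := (Finset.sup'_lt_iff hne).2 fun i _ => hp i
  have ha : 0 < a := by rw [hadef]; linarith
  have hai : ∀ i, a ≤ 2 - 2 * p i := by
    intro i
    have h1 : p i ≤ Finset.univ.sup' hne p := Finset.le_sup' p (Finset.mem_univ i)
    rw [hadef]; linarith
  obtain ⟨M, hM1, hM⟩ := poly_le_exp (show (0:ℝ) < a / 2 by linarith)
  have hM0 : (0:ℝ) < M := lt_of_lt_of_le one_pos hM1
  obtain ⟨K, hKdef⟩ : ∃ x : ℝ, x = 2 * M / a := ⟨_, rfl⟩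
  obtain ⟨A, hAdef⟩ : ∃ x : ℝ, x = 6 * M / a := ⟨_, rfl⟩
  have hK0 : 0 < K := by rw [hKdef]; positivity
  have hA0 : 0 < A := by rw [hAdef]; positivity
  obtain ⟨C, hCdef⟩ : ∃ x : ℝ, x = M + 4 * A * Real.exp (K / 2) := ⟨_, rfl⟩
  have hC0 : 0 < C := by rw [hCdef]; positivity
  have hMC : M ≤ C := by rw [hCdef]; nlinarith [Real.exp_pos (K / 2)]
  have h4AC : 4 * A * Real.exp (K / 2) ≤ C := by rw [hCdef]; linarith
  refine ⟨C, Real.exp K, hC0, Real.exp_pos K, ?_⟩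
  intro lam hlam tstar hts0 hts1 htaustar φ ψ hsol
  -- basic objects
  obtain ⟨T, hTdef⟩ : ∃ f : ℝ → ℝ, f = fun t => ∑ i, t ^ (2 - 2 * p i) * ((lam i : ℝ)) ^ 2 :=
    ⟨_, rfl⟩
  obtain ⟨L, hLdef⟩ : ∃ f : ℝ → ℝ, f = fun t => Real.log (tstar / t) := ⟨_, rfl⟩
  have hT_nonneg : ∀ t : ℝ, 0 < t → 0 ≤ T t := by
    intro t ht
    simp only [hTdef]
    exact Finset.sum_nonneg fun i _ => mul_nonneg (Real.rpow_nonneg ht.le _) (sq_nonneg _)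
  have htauT : ∀ t : ℝ, 0 < t → tau p lam t ^ 2 = T t := by
    intro t ht
    simp only [hTdef, tau]
    exact Real.sq_sqrt (Finset.sum_nonneg fun i _ =>
      mul_nonneg (Real.rpow_nonneg ht.le _) (sq_nonneg _))
  have hTstar : T tstar = 1 := by
    have h1 := htauT tstar hts0
    rw [htaustar] at h1
    simpa using h1.symm
  have hTcont : ContinuousOn T (Set.Ioi (0:ℝ)) := by
    rw [hTdef]
    apply continuousOn_finset_sum
    intro i _
    exact ContinuousOn.mul
      (fun t ht => (Real.continuousAt_rpow_const t _ (Or.inl (ne_of_gt ht))).continuousWithinAt)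
      continuousOn_const
  have hLcont : ContinuousOn L (Set.Ioi (0:ℝ)) := by
    rw [hLdef]
    intro t ht
    exact ((Real.continuousAt_log (ne_of_gt (div_pos hts0 ht))).comp
      (continuousAt_const.div continuousAt_id (ne_of_gt ht))).continuousWithinAt
  have hL_nonneg : ∀ t ∈ Set.Ioc (0:ℝ) tstar, 0 ≤ L t := by
    intro t ht
    simp only [hLdef]
    exact Real.log_nonneg ((one_le_div ht.1).2 ht.2)
  have hlog_eq : ∀ t : ℝ, 0 < t → Real.log (t / tstar) = -L t := by
    intro t ht
    simp only [hLdef]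
    rw [Real.log_div ht.ne' hts0.ne', Real.log_div hts0.ne' ht.ne']
    ring
  have hTmono : ∀ u t : ℝ, 0 < u → u ≤ t → T u ≤ (u / t) ^ a * T t := by
    intro u t hu hut
    have ht : 0 < t := lt_of_lt_of_le hu hut
    simp only [hTdef]
    rw [Finset.mul_sum]
    apply Finset.sum_le_sum
    intro i _
    have h1 : u ^ (2 - 2 * p i) = (u / t) ^ (2 - 2 * p i) * t ^ (2 - 2 * p i) := by
      rw [← Real.mul_rpow (by positivity) ht.le, div_mul_cancel₀ _ ht.ne']
    rw [h1]
    have h2 : (u / t) ^ (2 - 2 * p i) ≤ (u / t) ^ a :=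
      Real.rpow_le_rpow_of_exponent_ge (by positivity) ((div_le_one ht).2 hut) (hai i)
    have h3 := mul_le_mul_of_nonneg_right h2
      (mul_nonneg (Real.rpow_nonneg ht.le (2 - 2 * p i)) (sq_nonneg ((lam i : ℝ))))
    calc (u / t) ^ (2 - 2 * p i) * t ^ (2 - 2 * p i) * (lam i : ℝ) ^ 2
        = (u / t) ^ (2 - 2 * p i) * (t ^ (2 - 2 * p i) * (lam i : ℝ) ^ 2) := by ring
      _ ≤ (u / t) ^ a * (t ^ (2 - 2 * p i) * (lam i : ℝ) ^ 2) := h3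
  have hTpos : ∀ t : ℝ, 0 < t → 0 < T t := by
    intro t ht
    simp only [hTdef]
    obtain ⟨j, hj⟩ := Function.ne_iff.1 hlam
    refine Finset.sum_pos' (fun i _ => mul_nonneg (Real.rpow_nonneg ht.le _) (sq_nonneg _))
      ⟨j, Finset.mem_univ j, ?_⟩
    have hj' : ((lam j : ℝ)) ≠ 0 := Int.cast_ne_zero.2 hj
    exact mul_pos (Real.rpow_pos_of_pos ht _) (by positivity)
  have hTle : ∀ x ∈ Set.Ioc (0:ℝ) tstar, T x ≤ (x / tstar) ^ a := by
    intro x hx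
    have := hTmono x tstar hx.1 hx.2
    rwa [hTstar, mul_one] at this
  have hexpL : ∀ x : ℝ, 0 < x → Real.exp (a / 2 * L x) = (tstar / x) ^ (a / 2) := by
    intro x hx
    simp only [hLdef]
    rw [Real.rpow_def_of_pos (div_pos hts0 hx), mul_comm]
  -- phiTilde derivative
  have hφt_deriv : ∀ t ∈ Set.Ioc (0:ℝ) tstar,
      HasDerivAt (phiTilde φ ψ tstar) (T t * φ t * Real.log (t / tstar) / t) t := by
    intro t ht
    have hlog : HasDerivAt (fun u : ℝ => Real.log (u / tstar)) (1 / t) t := by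
      have h1 : HasDerivAt (fun u : ℝ => u / tstar) (1 / tstar) t := by
        simpa using (hasDerivAt_id t).div_const tstar
      have h2 := (Real.hasDerivAt_log (div_pos ht.1 hts0).ne').comp t h1
      have h3 : (t / tstar)⁻¹ * (1 / tstar) = 1 / t := by
        rw [inv_div, div_mul_div_comm, mul_one, mul_comm t tstar, ← div_div,
          div_self hts0.ne']
      rw [h3] at h2
      exact h2
    have hψd := (hsol t ht).2
    have hφd := (hsol t ht).1
    have h3 := hφd.sub ((hψd.mul hlog))
    have h4 : ψ t / t - (-(tau p lam t ^ 2) * φ t / t * Real.log (t / tstar) + ψ t * (1 / t))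
        = T t * φ t * Real.log (t / tstar) / t := by
      rw [htauT t ht.1]
      field_simp
      ring
    rw [h4] at h3
    exact h3
  obtain ⟨E, hEdef⟩ : ∃ f : ℝ → ℝ, f = fun t => ψ t ^ 2 + phiTilde φ ψ tstar t ^ 2 := ⟨_, rfl⟩
  obtain ⟨Ed, hEddef⟩ : ∃ f : ℝ → ℝ, f = fun t => 2 * ψ t * (-(T t) * φ t / t)
      + 2 * phiTilde φ ψ tstar t * (T t * φ t * Real.log (t / tstar) / t) := ⟨_, rfl⟩
  have hE_nonneg : ∀ t : ℝ, 0 ≤ E t := fun t => by simp only [hEdef]; positivity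
  have hψ_deriv : ∀ t ∈ Set.Ioc (0:ℝ) tstar, HasDerivAt ψ (-(T t) * φ t / t) t := by
    intro t ht
    have := (hsol t ht).2
    rwa [htauT t ht.1] at this
  have hE_deriv : ∀ t ∈ Set.Ioc (0:ℝ) tstar, HasDerivAt E (Ed t) t := by
    intro t ht
    have h1 := (hψ_deriv t ht).pow 2
    have h2 := (hφt_deriv t ht).pow 2
    have h3 := h1.add h2
    rw [hEdef]
    simp only [hEddef]
    refine h3.congr_deriv ?_
    push_cast
    ring
  obtain ⟨g, hgdef⟩ : ∃ f : ℝ → ℝ, f = fun t => T t * (1 + L t) ^ 2 / t := ⟨_, rfl⟩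
  have hgcont : ContinuousOn g (Set.Ioi (0:ℝ)) := by
    rw [hgdef]
    exact ContinuousOn.div (hTcont.mul ((continuousOn_const.add hLcont).pow 2))
      continuousOn_id (fun t ht => ne_of_gt ht)
  have hg_nonneg : ∀ t : ℝ, 0 < t → 0 ≤ g t := by
    intro t ht
    simp only [hgdef]
    have := hT_nonneg t ht
    positivity
  have hφ_eq : ∀ t ∈ Set.Ioc (0:ℝ) tstar, φ t = phiTilde φ ψ tstar t - L t * ψ t := by
    intro t ht
    rw [phiTilde, hlog_eq t ht.1]
    ring
  have hEd_bound : ∀ t ∈ Set.Ioc (0:ℝ) tstar, |Ed t| ≤ g t * E t := by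
    intro t ht
    have hl : 0 ≤ L t := hL_nonneg t ht
    have hTn := hT_nonneg t ht.1
    have hEd_eq : Ed t = -(2 * T t) * ((phiTilde φ ψ tstar t - L t * ψ t)
        * (ψ t + L t * phiTilde φ ψ tstar t)) / t := by
      simp only [hEddef]
      rw [hφ_eq t ht, hlog_eq t ht.1]
      field_simp
      ring
    have h1 : |phiTilde φ ψ tstar t - L t * ψ t| ≤ |phiTilde φ ψ tstar t| + L t * |ψ t| := by
      refine (abs_sub _ _).trans ?_
      rw [abs_mul, abs_of_nonneg hl]
    have h2 : |ψ t + L t * phiTilde φ ψ tstar t| ≤ |ψ t| + L t * |phiTilde φ ψ tstar t| := by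
      refine (abs_add_le _ _).trans ?_
      rw [abs_mul, abs_of_nonneg hl]
    have habs2 : |(-(2 * T t)) * ((phiTilde φ ψ tstar t - L t * ψ t)
        * (ψ t + L t * phiTilde φ ψ tstar t))|
        ≤ T t * ((1 + L t) ^ 2 * (ψ t ^ 2 + phiTilde φ ψ tstar t ^ 2)) := by
      rw [abs_mul, abs_neg, abs_of_nonneg (by linarith : (0:ℝ) ≤ 2 * T t), abs_mul]
      have h5 : |phiTilde φ ψ tstar t - L t * ψ t| * |ψ t + L t * phiTilde φ ψ tstar t|
          ≤ (|phiTilde φ ψ tstar t| + L t * |ψ t|)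
            * (|ψ t| + L t * |phiTilde φ ψ tstar t|) :=
        mul_le_mul h1 h2 (abs_nonneg _) (by positivity)
      have h6 : 2 * ((|phiTilde φ ψ tstar t| + L t * |ψ t|)
          * (|ψ t| + L t * |phiTilde φ ψ tstar t|))
          ≤ (1 + L t) ^ 2 * (ψ t ^ 2 + phiTilde φ ψ tstar t ^ 2) := by
        have hq := quad_aux (X := |ψ t|) (Y := |phiTilde φ ψ tstar t|) hl
        rwa [sq_abs, sq_abs] at hq
      calc 2 * T t * (|phiTilde φ ψ tstar t - L t * ψ t|
            * |ψ t + L t * phiTilde φ ψ tstar t|)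
          ≤ 2 * T t * ((|phiTilde φ ψ tstar t| + L t * |ψ t|)
            * (|ψ t| + L t * |phiTilde φ ψ tstar t|)) :=
            mul_le_mul_of_nonneg_left h5 (by linarith)
        _ = T t * (2 * ((|phiTilde φ ψ tstar t| + L t * |ψ t|)
            * (|ψ t| + L t * |phiTilde φ ψ tstar t|))) := by ring
        _ ≤ T t * ((1 + L t) ^ 2 * (ψ t ^ 2 + phiTilde φ ψ tstar t ^ 2)) :=
            mul_le_mul_of_nonneg_left h6 hTn
    calc |Ed t| = |(-(2 * T t)) * ((phiTilde φ ψ tstar t - L t * ψ t)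
          * (ψ t + L t * phiTilde φ ψ tstar t))| / t := by
          rw [hEd_eq, abs_div, abs_of_pos ht.1]
      _ ≤ T t * ((1 + L t) ^ 2 * (ψ t ^ 2 + phiTilde φ ψ tstar t ^ 2)) / t :=
          (div_le_div_iff_of_pos_right ht.1).2 habs2
      _ = g t * E t := by
          simp only [hgdef, hEdef]
          ring
  -- integral bound for g and integrability on (0,t]
  have hIoc_int : ∀ c : ℝ, 0 < c → ∀ t : ℝ, 0 < t →
      IntegrableOn (fun u : ℝ => u ^ (c - 1)) (Set.Ioc (0:ℝ) t) volume := by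
    intro c hc t ht
    have := intervalIntegral.intervalIntegrable_rpow' (a := 0) (b := t)
      (show (-1:ℝ) < c - 1 by linarith)
    rwa [intervalIntegrable_iff_integrableOn_Ioc_of_le ht.le] at this
  have hIoc_val : ∀ c : ℝ, 0 < c → ∀ t : ℝ, 0 < t →
      (∫ u in Set.Ioc (0:ℝ) t, u ^ (c - 1)) = t ^ c / c := by
    intro c hc t ht
    rw [← intervalIntegral.integral_of_le ht.le,
      integral_rpow (Or.inl (show (-1:ℝ) < c - 1 by linarith))]
    rw [show c - 1 + 1 = c by ring, Real.zero_rpow hc.ne']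
    ring
  -- pointwise bound for g on (0, t]
  have hg_pt : ∀ t ∈ Set.Ioc (0:ℝ) tstar, ∀ u ∈ Set.Ioc (0:ℝ) t,
      g u ≤ 2 * (1 + L t) ^ 2 * T t * t ^ (-a) * u ^ (a - 1)
        + 2 * M * T t * t ^ (-(a/2)) * u ^ (a/2 - 1) := by
    intro t ht u hu
    have hu0 : 0 < u := hu.1
    have ht0 : 0 < t := ht.1
    have hLsplit : L u = L t + Real.log (t / u) := by
      rw [hLdef]
      simp only
      rw [show tstar / u = tstar / t * (t / u) by field_simp,
        Real.log_mul (by positivity) (by positivity)]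
    have hlog_tu : 0 ≤ Real.log (t / u) := Real.log_nonneg ((one_le_div hu0).2 hu.2)
    have hb1 : T u ≤ (u / t) ^ a * T t := hTmono u t hu0 hu.2
    have hb2 : (1 + L u) ^ 2 ≤ 2 * (1 + L t) ^ 2 + 2 * M * (t / u) ^ (a / 2) := by
      have h1 : (1 + L u) ^ 2 ≤ 2 * (1 + L t) ^ 2 + 2 * Real.log (t / u) ^ 2 := by
        rw [hLsplit]
        nlinarith [sq_nonneg (1 + L t - Real.log (t / u))]
      have h2 : Real.log (t / u) ^ 2 ≤ (1 + Real.log (t / u)) ^ 2 := by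
        nlinarith
      have h3 : (1 + Real.log (t / u)) ^ 2 ≤ M * Real.exp (a / 2 * Real.log (t / u)) :=
        hM _ hlog_tu
      have h4 : Real.exp (a / 2 * Real.log (t / u)) = (t / u) ^ (a / 2) := by
        rw [Real.rpow_def_of_pos (div_pos ht0 hu0), mul_comm]
      rw [h4] at h3
      linarith
    have hb3 : T u * (1 + L u) ^ 2
        ≤ (u / t) ^ a * T t * (2 * (1 + L t) ^ 2 + 2 * M * (t / u) ^ (a / 2)) := by
      have hTu : 0 ≤ T u := hT_nonneg u hu0
      have h := mul_le_mul hb1 hb2 (sq_nonneg _)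
        (mul_nonneg (Real.rpow_nonneg (by positivity : (0:ℝ) ≤ u / t) a) (hT_nonneg t ht0))
      exact h
    have hPR : (u / t) ^ a * (t / u) ^ (a / 2) = (u / t) ^ (a / 2) := by
      rw [rpow_combine hu0 ht0, show a - a / 2 = a / 2 by ring]
    have key : T u * (1 + L u) ^ 2
        ≤ 2 * (1 + L t) ^ 2 * T t * (u / t) ^ a + 2 * M * T t * (u / t) ^ (a / 2) := by
      calc T u * (1 + L u) ^ 2
          ≤ (u / t) ^ a * T t * (2 * (1 + L t) ^ 2 + 2 * M * (t / u) ^ (a / 2)) := hb3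
        _ = 2 * (1 + L t) ^ 2 * T t * (u / t) ^ a
            + 2 * M * T t * ((u / t) ^ a * (t / u) ^ (a / 2)) := by ring
        _ = 2 * (1 + L t) ^ 2 * T t * (u / t) ^ a + 2 * M * T t * (u / t) ^ (a / 2) := by
            rw [hPR]
    simp only [hgdef]
    have hstep := (div_le_div_iff_of_pos_right hu0).2 key
    calc T u * (1 + L u) ^ 2 / u
        ≤ (2 * (1 + L t) ^ 2 * T t * (u / t) ^ a + 2 * M * T t * (u / t) ^ (a / 2)) / u :=
          hstep
      _ = 2 * (1 + L t) ^ 2 * T t * ((u / t) ^ a / u)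
          + 2 * M * T t * ((u / t) ^ (a / 2) / u) := by ring
      _ = 2 * (1 + L t) ^ 2 * T t * t ^ (-a) * u ^ (a - 1)
          + 2 * M * T t * t ^ (-(a/2)) * u ^ (a/2 - 1) := by
          rw [div_rpow_div hu0 ht0, div_rpow_div hu0 ht0]
          ring
  -- integrability of g on (0,t] and the key integral bound
  have hgIB : ∀ t ∈ Set.Ioc (0:ℝ) tstar, IntegrableOn g (Set.Ioc 0 t) volume ∧
      (∫ u in Set.Ioc (0:ℝ) t, g u) ≤ A * (T t * (1 + L t) ^ 2) := by
    intro t ht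
    have ht0 : 0 < t := ht.1
    have hint1 : IntegrableOn (fun u : ℝ => 2 * (1 + L t) ^ 2 * T t * t ^ (-a) * u ^ (a - 1))
        (Set.Ioc (0:ℝ) t) volume := (hIoc_int a ha t ht0).const_mul _
    have hint2 : IntegrableOn (fun u : ℝ => 2 * M * T t * t ^ (-(a/2)) * u ^ (a/2 - 1))
        (Set.Ioc (0:ℝ) t) volume := (hIoc_int (a/2) (by linarith) t ht0).const_mul _
    have hgm : IntegrableOn g (Set.Ioc (0:ℝ) t) volume := by
      apply Integrable.mono' (hint1.add hint2)
      · apply ContinuousOn.aestronglyMeasurable _ measurableSet_Ioc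
        exact hgcont.mono (fun u hu => hu.1)
      · refine (ae_restrict_iff' measurableSet_Ioc).2 (ae_of_all _ fun u hu => ?_)
        rw [Real.norm_eq_abs, abs_of_nonneg (hg_nonneg u hu.1)]
        exact hg_pt t ht u hu
    have hint12 : IntegrableOn (fun u : ℝ => 2 * (1 + L t) ^ 2 * T t * t ^ (-a) * u ^ (a - 1)
        + 2 * M * T t * t ^ (-(a/2)) * u ^ (a/2 - 1)) (Set.Ioc (0:ℝ) t) volume :=
      hint1.add hint2
    refine ⟨hgm, ?_⟩
    have hTt0 : 0 ≤ T t := hT_nonneg t ht0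
    have hLt0 : 0 ≤ L t := hL_nonneg t ht
    have htpow : t ^ (-a) * t ^ a = 1 := by
      rw [← Real.rpow_add ht0]; simp
    have htpow2 : t ^ (-(a/2)) * t ^ (a/2) = 1 := by
      rw [← Real.rpow_add ht0]; simp
    calc (∫ u in Set.Ioc (0:ℝ) t, g u)
        ≤ ∫ u in Set.Ioc (0:ℝ) t, (2 * (1 + L t) ^ 2 * T t * t ^ (-a) * u ^ (a - 1)
            + 2 * M * T t * t ^ (-(a/2)) * u ^ (a/2 - 1)) :=
          setIntegral_mono_on hgm hint12 measurableSet_Ioc (hg_pt t ht)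
      _ = 2 * (1 + L t) ^ 2 * T t * t ^ (-a) * (∫ u in Set.Ioc (0:ℝ) t, u ^ (a - 1))
          + 2 * M * T t * t ^ (-(a/2)) * (∫ u in Set.Ioc (0:ℝ) t, u ^ (a/2 - 1)) := by
          rw [integral_add hint1 hint2, integral_const_mul, integral_const_mul]
      _ = 2 * (1 + L t) ^ 2 * T t * t ^ (-a) * (t ^ a / a)
          + 2 * M * T t * t ^ (-(a/2)) * (t ^ (a/2) / (a/2)) := by
          rw [hIoc_val a ha t ht0, hIoc_val (a/2) (by linarith) t ht0]
      _ = 2 * (1 + L t) ^ 2 * T t * (t ^ (-a) * t ^ a) / a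
          + 4 * M * T t * (t ^ (-(a/2)) * t ^ (a/2)) / a := by ring
      _ = 2 * (1 + L t) ^ 2 * T t / a + 4 * M * T t / a := by rw [htpow, htpow2]; ring
      _ = (2 * (1 + L t) ^ 2 * T t + 4 * M * T t) / a := by ring
      _ ≤ (6 * M * (T t * (1 + L t) ^ 2)) / a := by
          refine (div_le_div_iff_of_pos_right ha).2 ?_
          have h1 : 0 ≤ M * (T t * ((1 + L t) ^ 2 - 1)) :=
            mul_nonneg (by linarith) (mul_nonneg hTt0 (by nlinarith))
          have h2 : 0 ≤ ((M - 1) * T t) * (1 + L t) ^ 2 :=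
            mul_nonneg (mul_nonneg (by linarith) hTt0) (sq_nonneg _)
          nlinarith [h1, h2]
      _ = A * (T t * (1 + L t) ^ 2) := by rw [hAdef]; ring
  -- Gronwall energy bound
  have hgK : ∀ u ∈ Set.Ioc (0:ℝ) tstar, (∫ x in u..tstar, g x) ≤ K := by
    intro u hu
    have hsub : Set.uIcc u tstar ⊆ Set.Ioi (0:ℝ) := by
      rw [Set.uIcc_of_le hu.2]
      intro x hx; exact lt_of_lt_of_le hu.1 hx.1
    have hint_g : IntervalIntegrable g volume u tstar :=
      (hgcont.mono hsub).intervalIntegrable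
    have hint_h : IntervalIntegrable (fun x : ℝ => M * tstar ^ (-(a/2)) * x ^ (a/2 - 1))
        volume u tstar :=
      (intervalIntegral.intervalIntegrable_rpow' (by linarith)).const_mul _
    have hpt : ∀ x ∈ Set.Icc u tstar, g x ≤ M * tstar ^ (-(a/2)) * x ^ (a/2 - 1) := by
      intro x hx
      have hx0 : 0 < x := lt_of_lt_of_le hu.1 hx.1
      have hx' : x ∈ Set.Ioc (0:ℝ) tstar := ⟨hx0, hx.2⟩
      have hb1 : T x ≤ (x / tstar) ^ a := hTle x hx'
      have hb2 : (1 + L x) ^ 2 ≤ M * (tstar / x) ^ (a/2) := by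
        have h0 := hM (L x) (hL_nonneg x hx')
        rwa [hexpL x hx0] at h0
      have hkey : T x * (1 + L x) ^ 2 ≤ M * (x / tstar) ^ (a/2) := by
        have h5 : T x * (1 + L x) ^ 2 ≤ (x / tstar) ^ a * (M * (tstar / x) ^ (a/2)) :=
          mul_le_mul hb1 hb2 (sq_nonneg _) (Real.rpow_nonneg (div_pos hx0 hts0).le _)
        have h6 : (x / tstar) ^ a * (tstar / x) ^ (a/2) = (x / tstar) ^ (a/2) := by
          rw [rpow_combine hx0 hts0, show a - a/2 = a/2 by ring]
        calc T x * (1 + L x) ^ 2 ≤ (x / tstar) ^ a * (M * (tstar / x) ^ (a/2)) := h5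
          _ = M * ((x / tstar) ^ a * (tstar / x) ^ (a/2)) := by ring
          _ = M * (x / tstar) ^ (a/2) := by rw [h6]
      have hgx : g x = T x * (1 + L x) ^ 2 / x := by rw [hgdef]
      rw [hgx]
      calc T x * (1 + L x) ^ 2 / x ≤ M * (x / tstar) ^ (a/2) / x :=
            (div_le_div_iff_of_pos_right hx0).2 hkey
        _ = M * ((x / tstar) ^ (a/2) / x) := by ring
        _ = M * (tstar ^ (-(a/2)) * x ^ (a/2 - 1)) := by rw [div_rpow_div hx0 hts0]
        _ = M * tstar ^ (-(a/2)) * x ^ (a/2 - 1) := by ring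
    calc (∫ x in u..tstar, g x)
        ≤ ∫ x in u..tstar, M * tstar ^ (-(a/2)) * x ^ (a/2 - 1) :=
          intervalIntegral.integral_mono_on hu.2 hint_g hint_h hpt
      _ = M * tstar ^ (-(a/2)) * ∫ x in u..tstar, x ^ (a/2 - 1) := by
          rw [intervalIntegral.integral_const_mul]
      _ = M * tstar ^ (-(a/2)) * ((tstar ^ (a/2) - u ^ (a/2)) / (a/2)) := by
          rw [integral_rpow (Or.inl (show (-1:ℝ) < a/2 - 1 by linarith)),
            show a/2 - 1 + 1 = a/2 by ring]
      _ ≤ K := by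
          have h1 : tstar ^ (-(a/2)) * tstar ^ (a/2) = 1 := by
            rw [← Real.rpow_add hts0]; simp
          have h2 : 0 ≤ u ^ (a/2) := Real.rpow_nonneg hu.1.le _
          have h3 : 0 ≤ tstar ^ (-(a/2)) := Real.rpow_nonneg hts0.le _
          rw [hKdef]
          have expand : M * tstar ^ (-(a/2)) * ((tstar ^ (a/2) - u ^ (a/2)) / (a/2)) =
              (M * (tstar ^ (-(a/2)) * tstar ^ (a/2))
                - M * (tstar ^ (-(a/2)) * u ^ (a/2))) / (a/2) := by ring
          rw [expand, h1]
          have h4 : 0 ≤ M * (tstar ^ (-(a/2)) * u ^ (a/2)) := by positivity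
          rw [div_le_iff₀ (by linarith : (0:ℝ) < a/2)]
          have h5 : 2 * M / a * (a / 2) = M := by field_simp
          rw [h5]
          linarith
  have hEbound : ∀ u ∈ Set.Ioc (0:ℝ) tstar, E u ≤ Real.exp K * E tstar := by
    intro u hu
    have h1 := gronwall_aux hu.2 (fun x hx => lt_of_lt_of_le hu.1 hx.1)
      (fun v hv => hE_deriv v ⟨lt_of_lt_of_le hu.1 hv.1, hv.2⟩) hgcont
      (fun v hv => hEd_bound v ⟨lt_of_lt_of_le hu.1 hv.1, hv.2⟩)
    calc E u ≤ E tstar * Real.exp (∫ x in u..tstar, g x) := h1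
      _ ≤ E tstar * Real.exp K :=
          mul_le_mul_of_nonneg_left (Real.exp_le_exp.2 (hgK u hu)) (hE_nonneg tstar)
      _ = Real.exp K * E tstar := mul_comm _ _
  -- pointwise bounds on the derivatives
  obtain ⟨Q, hQdef⟩ : ∃ x : ℝ, x = Real.exp (K/2) * Real.sqrt (Elow φ ψ tstar tstar) := ⟨_, rfl⟩
  have hElow_star : Elow φ ψ tstar tstar = E tstar := by simp only [Elow, hEdef]
  have hQ0 : 0 ≤ Q := by
    rw [hQdef]; positivity
  have hsqE : ∀ u ∈ Set.Ioc (0:ℝ) tstar, Real.sqrt (E u) ≤ Q := by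
    intro u hu
    rw [hQdef, hElow_star]
    calc Real.sqrt (E u) ≤ Real.sqrt (Real.exp K * E tstar) :=
          Real.sqrt_le_sqrt (hEbound u hu)
      _ = Real.exp (K/2) * Real.sqrt (E tstar) := by
          rw [Real.sqrt_mul (Real.exp_nonneg K), ← Real.exp_half]
  have habsψ : ∀ u : ℝ, |ψ u| ≤ Real.sqrt (E u) := by
    intro u
    rw [← Real.sqrt_sq_eq_abs]
    apply Real.sqrt_le_sqrt
    simp only [hEdef]
    nlinarith [sq_nonneg (phiTilde φ ψ tstar u)]
  have habsφt : ∀ u : ℝ, |phiTilde φ ψ tstar u| ≤ Real.sqrt (E u) := by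
    intro u
    rw [← Real.sqrt_sq_eq_abs]
    apply Real.sqrt_le_sqrt
    simp only [hEdef]
    nlinarith [sq_nonneg (ψ u)]
  have hφ_bound : ∀ u ∈ Set.Ioc (0:ℝ) tstar, |φ u| ≤ (1 + L u) * Q := by
    intro u hu
    have hLu := hL_nonneg u hu
    rw [hφ_eq u hu]
    calc |phiTilde φ ψ tstar u - L u * ψ u|
        ≤ |phiTilde φ ψ tstar u| + L u * |ψ u| := by
          refine (abs_sub _ _).trans ?_
          rw [abs_mul, abs_of_nonneg hLu]
      _ ≤ Real.sqrt (E u) + L u * Real.sqrt (E u) :=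
          add_le_add (habsφt u) (mul_le_mul_of_nonneg_left (habsψ u) hLu)
      _ = (1 + L u) * Real.sqrt (E u) := by ring
      _ ≤ (1 + L u) * Q := mul_le_mul_of_nonneg_left (hsqE u hu) (by linarith)
  obtain ⟨ψd, hψddef⟩ : ∃ f : ℝ → ℝ, f = fun u => -(T u) * φ u / u := ⟨_, rfl⟩
  obtain ⟨φtd, hφtddef⟩ : ∃ f : ℝ → ℝ, f = fun u => T u * φ u * Real.log (u / tstar) / u :=
    ⟨_, rfl⟩
  have hψd_deriv : ∀ u ∈ Set.Ioc (0:ℝ) tstar, HasDerivAt ψ (ψd u) u := by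
    intro u hu; simp only [hψddef]; exact hψ_deriv u hu
  have hφtd_deriv : ∀ u ∈ Set.Ioc (0:ℝ) tstar,
      HasDerivAt (phiTilde φ ψ tstar) (φtd u) u := by
    intro u hu; simp only [hφtddef]; exact hφt_deriv u hu
  have hφcont : ContinuousOn φ (Set.Ioc (0:ℝ) tstar) :=
    fun u hu => ((hsol u hu).1.continuousAt).continuousWithinAt
  have hψd_cont : ContinuousOn ψd (Set.Ioc (0:ℝ) tstar) := by
    rw [hψddef]
    exact ContinuousOn.div (((hTcont.mono (fun x hx => hx.1)).neg).mul hφcont)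
      continuousOn_id (fun u hu => ne_of_gt hu.1)
  have hlogcont : ContinuousOn (fun u : ℝ => Real.log (u / tstar))
      (Set.Ioc (0:ℝ) tstar) := by
    apply ContinuousOn.log
    · exact (continuous_id.div_const tstar).continuousOn
    · intro x hx; exact (div_pos hx.1 hts0).ne'
  have hφtd_cont : ContinuousOn φtd (Set.Ioc (0:ℝ) tstar) := by
    rw [hφtddef]
    exact ContinuousOn.div (((hTcont.mono (fun x hx => hx.1)).mul hφcont).mul hlogcont)
      continuousOn_id (fun u hu => ne_of_gt hu.1)
  have hgint : ∀ t ∈ Set.Ioc (0:ℝ) tstar, IntegrableOn g (Set.Ioc 0 t) volume :=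
    fun t ht => (hgIB t ht).1
  have hψd_bd : ∀ u ∈ Set.Ioc (0:ℝ) tstar, |ψd u| ≤ Q * g u := by
    intro u hu
    have hLu := hL_nonneg u hu
    have hTu := hT_nonneg u hu.1
    have h1 : |ψd u| = T u * |φ u| / u := by
      simp only [hψddef]
      rw [abs_div, abs_of_pos hu.1, abs_mul, abs_neg, abs_of_nonneg hTu]
    rw [h1]
    have h2 : T u * |φ u| ≤ T u * ((1 + L u) * Q) :=
      mul_le_mul_of_nonneg_left (hφ_bound u hu) hTu
    have h3 : T u * ((1 + L u) * Q) ≤ Q * (T u * (1 + L u) ^ 2) := by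
      have h3' : 0 ≤ Q * T u * (1 + L u) * L u :=
        mul_nonneg (mul_nonneg (mul_nonneg hQ0 hTu) (by linarith)) hLu
      nlinarith [h3']
    calc T u * |φ u| / u ≤ T u * ((1 + L u) * Q) / u := (div_le_div_iff_of_pos_right hu.1).2 h2
      _ ≤ Q * (T u * (1 + L u) ^ 2) / u := (div_le_div_iff_of_pos_right hu.1).2 h3
      _ = Q * g u := by simp only [hgdef]; ring
  have hφtd_bd : ∀ u ∈ Set.Ioc (0:ℝ) tstar, |φtd u| ≤ Q * g u := by
    intro u hu
    have hLu := hL_nonneg u hu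
    have hTu := hT_nonneg u hu.1
    have h1 : |φtd u| = T u * |φ u| * L u / u := by
      simp only [hφtddef]
      rw [abs_div, abs_of_pos hu.1, abs_mul, abs_mul, abs_of_nonneg hTu,
        hlog_eq u hu.1, abs_neg, abs_of_nonneg hLu]
    rw [h1]
    have h2 : T u * |φ u| * L u ≤ T u * ((1 + L u) * Q) * L u :=
      mul_le_mul_of_nonneg_right (mul_le_mul_of_nonneg_left (hφ_bound u hu) hTu) hLu
    have h3 : T u * ((1 + L u) * Q) * L u ≤ Q * (T u * (1 + L u) ^ 2) := by
      have h3' : 0 ≤ Q * T u * (1 + L u) :=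
        mul_nonneg (mul_nonneg hQ0 hTu) (by linarith)
      nlinarith [h3']
    calc T u * |φ u| * L u / u ≤ T u * ((1 + L u) * Q) * L u / u :=
          (div_le_div_iff_of_pos_right hu.1).2 h2
      _ ≤ Q * (T u * (1 + L u) ^ 2) / u := (div_le_div_iff_of_pos_right hu.1).2 h3
      _ = Q * g u := by simp only [hgdef]; ring
  have hψrate := rate_aux hts0 hψd_deriv hψd_cont hgint hψd_bd
  have hφtrate := rate_aux hts0 hφtd_deriv hφtd_cont hgint hφtd_bd
  have hrate2 : ∀ t ∈ Set.Ioc (0:ℝ) tstar,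
      |ψ t - (ψ tstar - ∫ u in Set.Ioc 0 tstar, ψd u)| ≤ Q * (A * (T t * (1 + L t) ^ 2)) ∧
      |phiTilde φ ψ tstar t - (phiTilde φ ψ tstar tstar - ∫ u in Set.Ioc 0 tstar, φtd u)|
        ≤ Q * (A * (T t * (1 + L t) ^ 2)) := by
    intro t ht
    exact ⟨(hψrate t ht).trans (mul_le_mul_of_nonneg_left (hgIB t ht).2 hQ0),
      (hφtrate t ht).trans (mul_le_mul_of_nonneg_left (hgIB t ht).2 hQ0)⟩
  have hTL2 : ∀ t ∈ Set.Ioc (0:ℝ) tstar, T t * (1 + L t) ^ 2 ≤ M * (t/tstar) ^ (a/2) := by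
    intro t ht
    have hb1 : T t ≤ (t / tstar) ^ a := hTle t ht
    have hb2 : (1 + L t) ^ 2 ≤ M * (tstar / t) ^ (a/2) := by
      have h0 := hM (L t) (hL_nonneg t ht); rwa [hexpL t ht.1] at h0
    have h5 := mul_le_mul hb1 hb2 (sq_nonneg _) (Real.rpow_nonneg (div_pos ht.1 hts0).le _)
    have h6 : (t / tstar) ^ a * (tstar / t) ^ (a/2) = (t / tstar) ^ (a/2) := by
      rw [rpow_combine ht.1 hts0, show a - a/2 = a/2 by ring]
    calc T t * (1 + L t) ^ 2 ≤ (t / tstar) ^ a * (M * (tstar / t) ^ (a/2)) := h5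
      _ = M * ((t / tstar) ^ a * (tstar / t) ^ (a/2)) := by ring
      _ = M * (t/tstar) ^ (a/2) := by rw [h6]
  have hbnd_tend : Tendsto (fun t : ℝ => Q * (A * (M * (t/tstar) ^ (a/2))))
      (𝓝[>] (0:ℝ)) (𝓝 0) := by
    have h1 : Tendsto (fun t : ℝ => t / tstar) (𝓝[>] (0:ℝ)) (𝓝 0) := by
      have h0 : Tendsto (fun t : ℝ => t / tstar) (𝓝 (0:ℝ)) (𝓝 (0 / tstar)) :=
        (continuous_id.div_const tstar).tendsto (0:ℝ)
      rw [zero_div] at h0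
      exact h0.mono_left nhdsWithin_le_nhds
    have h2 : ContinuousAt (fun x : ℝ => x ^ (a/2)) 0 :=
      Real.continuousAt_rpow_const 0 (a/2) (Or.inr (by linarith))
    have h3 := h2.tendsto.comp h1
    rw [Real.zero_rpow (ne_of_gt (by linarith : (0:ℝ) < a/2))] at h3
    have h4 := h3.const_mul (Q * (A * M))
    rw [mul_zero] at h4
    simpa [mul_assoc, Function.comp] using h4
  have hIocmem : Set.Ioc (0:ℝ) tstar ∈ 𝓝[>] (0:ℝ) :=
    Ioc_mem_nhdsGT_of_mem ⟨le_refl 0, hts0⟩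
  have hub : ∀ t ∈ Set.Ioc (0:ℝ) tstar,
      Q * (A * (T t * (1 + L t) ^ 2)) ≤ Q * (A * (M * (t/tstar) ^ (a/2))) := fun t ht =>
    mul_le_mul_of_nonneg_left (mul_le_mul_of_nonneg_left (hTL2 t ht) hA0.le) hQ0
  have hψlim : Tendsto ψ (𝓝[>] (0:ℝ))
      (𝓝 (ψ tstar - ∫ u in Set.Ioc 0 tstar, ψd u)) := by
    have habs0 : Tendsto (fun t => |ψ t - (ψ tstar - ∫ u in Set.Ioc 0 tstar, ψd u)|)
        (𝓝[>] (0:ℝ)) (𝓝 0) := by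
      refine squeeze_zero' (Eventually.of_forall fun t => abs_nonneg _)
        (Filter.eventually_of_mem hIocmem fun t ht => ?_) hbnd_tend
      exact ((hrate2 t ht).1).trans (hub t ht)
    have h5 : Tendsto (fun t => ψ t - (ψ tstar - ∫ u in Set.Ioc 0 tstar, ψd u))
        (𝓝[>] (0:ℝ)) (𝓝 0) := (tendsto_zero_iff_abs_tendsto_zero _).2 habs0
    have h6 := h5.add_const (ψ tstar - ∫ u in Set.Ioc 0 tstar, ψd u)
    simpa using h6
  have hφtlim : Tendsto (phiTilde φ ψ tstar) (𝓝[>] (0:ℝ))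
      (𝓝 (phiTilde φ ψ tstar tstar - ∫ u in Set.Ioc 0 tstar, φtd u)) := by
    have habs0 : Tendsto (fun t => |phiTilde φ ψ tstar t
        - (phiTilde φ ψ tstar tstar - ∫ u in Set.Ioc 0 tstar, φtd u)|)
        (𝓝[>] (0:ℝ)) (𝓝 0) := by
      refine squeeze_zero' (Eventually.of_forall fun t => abs_nonneg _)
        (Filter.eventually_of_mem hIocmem fun t ht => ?_) hbnd_tend
      exact ((hrate2 t ht).2).trans (hub t ht)
    have h5 : Tendsto (fun t => phiTilde φ ψ tstar t
        - (phiTilde φ ψ tstar tstar - ∫ u in Set.Ioc 0 tstar, φtd u))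
        (𝓝[>] (0:ℝ)) (𝓝 0) := (tendsto_zero_iff_abs_tendsto_zero _).2 habs0
    have h6 := h5.add_const (phiTilde φ ψ tstar tstar - ∫ u in Set.Ioc 0 tstar, φtd u)
    simpa using h6
  refine ⟨ψ tstar - ∫ u in Set.Ioc 0 tstar, ψd u,
    phiTilde φ ψ tstar tstar - ∫ u in Set.Ioc 0 tstar, φtd u, hψlim, hφtlim, ?_, ?_⟩
  · intro t ht
    have hTt0 := hT_nonneg t ht.1
    have hLt := hL_nonneg t ht
    have hτ : tau p lam t ^ 2 = T t := htauT t ht.1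
    have hτ0 : 0 ≤ tau p lam t := Real.sqrt_nonneg _
    have hS0 : 0 ≤ Real.sqrt (Elow φ ψ tstar tstar) := Real.sqrt_nonneg _
    have hLt_def : Real.log (tstar / t) = L t := by rw [hLdef]
    have hLL : (1 + L t) ^ 2 ≤ 2 * (1 + L t ^ 2) := by nlinarith [sq_nonneg (1 - L t)]
    have h1 := (hrate2 t ht).1
    have h2 := (hrate2 t ht).2
    have main1 : |ψ t - (ψ tstar - ∫ u in Set.Ioc 0 tstar, ψd u)|
        + |phiTilde φ ψ tstar t - (phiTilde φ ψ tstar tstar - ∫ u in Set.Ioc 0 tstar, φtd u)|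
        ≤ C * (T t * (1 + L t ^ 2)) * Real.sqrt (Elow φ ψ tstar tstar) := by
      calc |ψ t - (ψ tstar - ∫ u in Set.Ioc 0 tstar, ψd u)|
            + |phiTilde φ ψ tstar t
              - (phiTilde φ ψ tstar tstar - ∫ u in Set.Ioc 0 tstar, φtd u)|
          ≤ 2 * (Q * (A * (T t * (1 + L t) ^ 2))) := by linarith
        _ = (2 * Q * A) * (T t * (1 + L t) ^ 2) := by ring
        _ ≤ (2 * Q * A) * (T t * (2 * (1 + L t ^ 2))) :=
            mul_le_mul_of_nonneg_left (mul_le_mul_of_nonneg_left hLL hTt0) (by positivity)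
        _ = (4 * A * Real.exp (K/2)) * (T t * (1 + L t ^ 2))
            * Real.sqrt (Elow φ ψ tstar tstar) := by rw [hQdef]; ring
        _ ≤ C * (T t * (1 + L t ^ 2)) * Real.sqrt (Elow φ ψ tstar tstar) := by
            refine mul_le_mul_of_nonneg_right (mul_le_mul_of_nonneg_right h4AC ?_) hS0
            have : (0:ℝ) ≤ 1 + L t ^ 2 := by positivity
            exact mul_nonneg hTt0 this
    have hτ1 : tau p lam t * (1 + L t ^ 2) ≤ M := by
      have hA1 : tau p lam t ≤ (t/tstar) ^ (a/2) := by
        have hh1 : (t/tstar) ^ a = ((t/tstar) ^ (a/2)) ^ 2 := by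
          rw [← Real.rpow_natCast ((t/tstar) ^ (a/2)) 2,
            ← Real.rpow_mul (div_pos ht.1 hts0).le]
          norm_num
        have hh2 : T t ≤ ((t/tstar) ^ (a/2)) ^ 2 := by rw [← hh1]; exact hTle t ht
        have hh3 : tau p lam t = Real.sqrt (T t) := by simp only [tau, hTdef]
        calc tau p lam t = Real.sqrt (T t) := hh3
          _ ≤ Real.sqrt (((t/tstar) ^ (a/2)) ^ 2) := Real.sqrt_le_sqrt hh2
          _ = (t/tstar) ^ (a/2) := Real.sqrt_sq (Real.rpow_nonneg (div_pos ht.1 hts0).le _)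
      have hA2 : 1 + L t ^ 2 ≤ M * (tstar/t) ^ (a/2) := by
        have hh1 : 1 + L t ^ 2 ≤ (1 + L t) ^ 2 := by nlinarith
        refine hh1.trans ?_
        have h0 := hM (L t) hLt; rwa [hexpL t ht.1] at h0
      have hA3 := mul_le_mul hA1 hA2 (by positivity) (Real.rpow_nonneg (div_pos ht.1 hts0).le _)
      calc tau p lam t * (1 + L t ^ 2)
          ≤ (t/tstar) ^ (a/2) * (M * (tstar/t) ^ (a/2)) := hA3
        _ = M * ((t/tstar) ^ (a/2) * (tstar/t) ^ (a/2)) := by ring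
        _ = M := by rw [rpow_combine ht.1 hts0, sub_self, Real.rpow_zero, mul_one]
    have main2 : C * (T t * (1 + L t ^ 2)) * Real.sqrt (Elow φ ψ tstar tstar)
        ≤ C ^ 2 * tau p lam t * Real.sqrt (Elow φ ψ tstar tstar) := by
      calc C * (T t * (1 + L t ^ 2)) * Real.sqrt (Elow φ ψ tstar tstar)
          = (C * Real.sqrt (Elow φ ψ tstar tstar) * tau p lam t)
            * (tau p lam t * (1 + L t ^ 2)) := by rw [← hτ]; ring
        _ ≤ (C * Real.sqrt (Elow φ ψ tstar tstar) * tau p lam t) * C := by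
            refine mul_le_mul_of_nonneg_left (hτ1.trans hMC) ?_
            exact mul_nonneg (mul_nonneg hC0.le hS0) hτ0
        _ = C ^ 2 * tau p lam t * Real.sqrt (Elow φ ψ tstar tstar) := by ring
    rw [hτ, hLt_def]
    exact ⟨main1, main2⟩
  · have hElim : Tendsto (fun t => ψ t ^ 2 + phiTilde φ ψ tstar t ^ 2) (𝓝[>] (0:ℝ))
        (𝓝 ((ψ tstar - ∫ u in Set.Ioc 0 tstar, ψd u) ^ 2
          + (phiTilde φ ψ tstar tstar - ∫ u in Set.Ioc 0 tstar, φtd u) ^ 2)) :=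
      (hψlim.pow 2).add (hφtlim.pow 2)
    have hev : ∀ᶠ t in 𝓝[>] (0:ℝ),
        ψ t ^ 2 + phiTilde φ ψ tstar t ^ 2 ≤ Real.exp K * Elow φ ψ tstar tstar := by
      refine Filter.eventually_of_mem hIocmem fun t ht => ?_
      have h0 := hEbound t ht
      rw [hElow_star]
      simpa only [hEdef] using h0
    exact le_of_tendsto hElim hev
end

section
/- (Low-frequency energy estimate for linearized Einstein–scalar field.) Assume the exponents are δ-subcritical for some δ > 0. Let λ ∈ ℤ^D \ {0} and let (η, κ, φ, ψ, ν) be a λ-mode CMCTC solution of the linearized Einstein–scalar field system on (0, t_{λ*}]. Then: (i) there is C > 0 depending only on D, p_1,…,p_D, p_φ and δ such that for every t ∈ (0, t_{λ*}]: |t·(d/dt)E_{λ,low}(t)| ≤ C·(t/t_{λ*})^δ·E_{λ,low}(t); (ii) there is C̊_low > 0 depending only on D, p_1,…,p_D, p_φ and δ such that for every t ∈ (0, t_{λ*}]: C̊_low^{−1}·E_{λ,low}(t) ≤ E_{λ,low}(t_{λ*}) ≤ C̊_low·E_{λ,low}(t). -/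
open Real Filter MeasureTheory Topology

/-- A λ-mode CMCTC solution of the linearized Einstein–scalar field system on the
interval `I`: the projection of the linearized system in the constant-mean-curvature
transported-coordinate gauge (vanishing shift) onto the Fourier mode λ. -/
structure IsCMCTCSolution {D : ℕ} (p : Fin D → ℝ) (pphi : ℝ) (lam : Fin D → ℤ)
    (η κ : ℝ → Fin D → Fin D → ℝ) (φ ψ ν : ℝ → ℝ) (I : Set ℝ) : Prop where
  cont_nu : ContinuousOn ν I
  eta_evol : ∀ t ∈ I, ∀ i j, HasDerivAt (fun s => η s i j)
    ((κ t i j + 2 * (p i - p j) * η t i j - p i * (if i = j then 1 else 0) * ν t) / t) t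
  kappa_evol : ∀ t ∈ I, ∀ i j, HasDerivAt (fun s => κ s i j)
    ((-(tau p lam t ^ 2) * η t i j
      - t ^ (2 - 2 * p j) * (lam i : ℝ) * (lam j : ℝ) * (∑ a, η t a a)
      + (∑ a, t ^ (2 - 2 * p a) * (lam i : ℝ) * (lam a : ℝ) * η t a j)
      + t ^ (2 - 2 * p j) * (lam j : ℝ) * (∑ b, (lam b : ℝ) * η t i b)
      + t ^ (2 - 2 * p j) * (lam i : ℝ) * (lam j : ℝ) * ν t
      + p i * (if i = j then 1 else 0) * ν t) / t) t
  phi_evol : ∀ t ∈ I, HasDerivAt φ ((ψ t + pphi * ν t) / t) t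
  psi_evol : ∀ t ∈ I, HasDerivAt ψ ((-(tau p lam t ^ 2) * φ t - pphi * ν t) / t) t
  nu_elliptic : ∀ t ∈ I, (1 + tau p lam t ^ 2) * ν t =
    2 * tau p lam t ^ 2 * (∑ a, η t a a)
      - 2 * ∑ a, ∑ i, t ^ (2 - 2 * p a) * (lam a : ℝ) * (lam i : ℝ) * η t a i
  cmc : ∀ t ∈ I, ∑ a, κ t a a = 0
  hamiltonian : ∀ t ∈ I,
    2 * tau p lam t ^ 2 * (∑ a, η t a a)
      - 2 * (∑ a, ∑ i, t ^ (2 - 2 * p a) * (lam a : ℝ) * (lam i : ℝ) * η t a i)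
      - 2 * (∑ a, p a * κ t a a) + 4 * pphi * ψ t = 0
  momentum : ∀ t ∈ I, ∀ i,
    (∑ j, (lam j : ℝ) * κ t i j)
      + (lam i : ℝ) * (-(∑ a, p a * η t a a) + 2 * pphi * φ t)
      + p i * (lam i : ℝ) * (∑ a, η t a a) = 0
  sym_eta : ∀ t ∈ I, ∀ a c,
    t ^ (-(2 * p a)) * η t a c = t ^ (-(2 * p c)) * η t c a
  sym_kappa : ∀ t ∈ I, ∀ a c,
    t ^ (-(2 * p a)) * (κ t a c + 2 * p a * η t a c)
      = t ^ (-(2 * p c)) * (κ t c a + 2 * p c * η t c a)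

/-- G_i{}^j(t) = ∫_t^{t_{λ*}} s^{2pᵢ-2pⱼ} ds/s. -/
noncomputable def Gfun {D : ℕ} (p : Fin D → ℝ) (tstar : ℝ) (i j : Fin D) (t : ℝ) : ℝ :=
  ∫ s in t..tstar, s ^ (2 * p i - 2 * p j - 1)

/-- The renormalized quantity Υ̃_i{}^j(t) = η_i{}^j(t) + G_i{}^j(t)·κ_j{}^i(t). -/
noncomputable def UpsT {D : ℕ} (p : Fin D → ℝ) (tstar : ℝ)
    (η κ : ℝ → Fin D → Fin D → ℝ) (t : ℝ) (i j : Fin D) : ℝ :=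
  η t i j + Gfun p tstar i j t * κ t j i

/-- The renormalized scalar field φ̃(t) = φ(t) + log(t_{λ*}/t)·ψ(t). -/
noncomputable def phiT (φ ψ : ℝ → ℝ) (tstar t : ℝ) : ℝ :=
  φ t + Real.log (tstar / t) * ψ t

/-- The low-frequency energy E_{λ,low} of the linearized Einstein–scalar field system. -/
noncomputable def ElowSys {D : ℕ} (p : Fin D → ℝ) (tstar : ℝ)
    (η κ : ℝ → Fin D → Fin D → ℝ) (φ ψ : ℝ → ℝ) (t : ℝ) : ℝ :=
  (∑ i, ∑ j, tstar ^ (-(2 * p i) + 2 * p j)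
      * ((κ t i j) ^ 2 + (UpsT p tstar η κ t i j) ^ 2))
    + ψ t ^ 2 + phiT φ ψ tstar t ^ 2


set_option linter.unusedSectionVars false
open intervalIntegral
set_option linter.unusedVariables false
set_option maxHeartbeats 1000000

section glem
variable {D : ℕ} (p : Fin D → ℝ) (tstar : ℝ) (i j : Fin D)

lemma Gfun_eq (htstar : 0 < tstar) {t : ℝ} (ht : 0 < t) :
    Gfun p tstar i j t = if p i = p j then Real.log (tstar / t)
      else (tstar ^ (2 * p i - 2 * p j) - t ^ (2 * p i - 2 * p j)) / (2 * p i - 2 * p j) := by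
  have h0 : (0:ℝ) ∉ Set.uIcc t tstar := by
    rw [Set.mem_uIcc]; push_neg
    constructor <;> intro h <;> linarith
  by_cases hpe : p i = p j
  · rw [if_pos hpe]
    have hcg : Set.EqOn (fun s : ℝ => s ^ (2 * p i - 2 * p j - 1)) (fun s => 1 / s)
        (Set.uIcc t tstar) := by
      intro s hs
      have : (2 : ℝ) * p i - 2 * p j - 1 = -1 := by rw [hpe]; ring
      simp only [this, Real.rpow_neg_one, one_div]
    rw [Gfun, integral_congr hcg, integral_one_div h0]
  · have hne : 2 * p i - 2 * p j ≠ 0 := by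
      intro h; exact hpe (by linarith)
    rw [if_neg hpe, Gfun, integral_rpow]
    · ring_nf
    · exact Or.inr ⟨by intro h; exact hne (by linarith), h0⟩

lemma Gfun_hasDerivAt (htstar : 0 < tstar) {t : ℝ} (ht : 0 < t) :
    HasDerivAt (Gfun p tstar i j) (-(t ^ (2 * p i - 2 * p j - 1))) t := by
  have hev : (fun s => if p i = p j then Real.log (tstar / s)
      else (tstar ^ (2 * p i - 2 * p j) - s ^ (2 * p i - 2 * p j)) / (2 * p i - 2 * p j))
      =ᶠ[𝓝 t] Gfun p tstar i j := by
    filter_upwards [eventually_gt_nhds ht] with s hs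
    exact (Gfun_eq p tstar i j htstar hs).symm
  apply HasDerivAt.congr_of_eventuallyEq _ hev.symm
  by_cases hpe : p i = p j
  · simp only [if_pos hpe]
    have h1 : (fun s : ℝ => Real.log (tstar / s)) =ᶠ[𝓝 t]
        (fun s => Real.log tstar - Real.log s) := by
      filter_upwards [eventually_gt_nhds ht] with s hs
      rw [Real.log_div (ne_of_gt htstar) (ne_of_gt hs)]
    apply HasDerivAt.congr_of_eventuallyEq _ h1
    have : (2 : ℝ) * p i - 2 * p j - 1 = -1 := by rw [hpe]; ring
    rw [this, Real.rpow_neg_one]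
    simpa using (Real.hasDerivAt_log (ne_of_gt ht)).const_sub (Real.log tstar)
  · simp only [if_neg hpe]
    have hne : 2 * p i - 2 * p j ≠ 0 := by
      intro h; exact hpe (by linarith)
    have h2 := ((Real.hasDerivAt_rpow_const (p := 2 * p i - 2 * p j)
      (Or.inl (ne_of_gt ht))).const_sub (tstar ^ (2 * p i - 2 * p j))).div_const
      (2 * p i - 2 * p j)
    refine h2.congr_deriv ?_
    field_simp

/-- bound for Gfun -/
lemma Gfun_bound {δ : ℝ} (hδ : 0 < δ) (htstar : 0 < tstar) {t : ℝ} (ht : 0 < t)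
    (hts : t ≤ tstar) :
    |Gfun p tstar i j t| ≤ ((if p i = p j then 2 / δ else |2 * p i - 2 * p j|⁻¹))
      * tstar ^ (2 * p i - 2 * p j) * (t / tstar) ^ (-(max (2 * (p j - p i)) (δ / 2))) := by
  have hx0 : 0 < t / tstar := div_pos ht htstar
  have hx1 : t / tstar ≤ 1 := (div_le_one htstar).2 hts
  have hq : 0 < max (2 * (p j - p i)) (δ / 2) := lt_max_of_lt_right (by linarith)
  have hxq1 : (1:ℝ) ≤ (t / tstar) ^ (-(max (2 * (p j - p i)) (δ / 2))) := by
    calc (1:ℝ) = (t / tstar) ^ (0:ℝ) := (Real.rpow_zero _).symm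
    _ ≤ _ := Real.rpow_le_rpow_of_exponent_ge hx0 hx1 (by linarith)
  rw [Gfun_eq p tstar i j htstar ht]
  by_cases hpe : p i = p j
  · rw [if_pos hpe, if_pos hpe]
    have he0 : (2:ℝ) * p i - 2 * p j = 0 := by rw [hpe]; ring
    rw [he0, Real.rpow_zero, mul_one]
    have h1 : 0 ≤ Real.log (tstar / t) :=
      Real.log_nonneg ((one_le_div ht).2 hts)
    rw [abs_of_nonneg h1]
    have h2 : Real.log (tstar / t) ≤ (tstar / t) ^ (δ / 2) / (δ / 2) :=
      Real.log_le_rpow_div (le_of_lt (div_pos htstar ht)) (by linarith)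
    have h3 : (tstar / t) ^ (δ / 2) = (t / tstar) ^ (-(δ/2)) := by
      rw [Real.rpow_neg (le_of_lt hx0), ← Real.inv_rpow (le_of_lt hx0)]
      congr 1
      field_simp
    calc Real.log (tstar / t) ≤ (tstar / t) ^ (δ / 2) / (δ / 2) := h2
      _ = (2 / δ) * (t / tstar) ^ (-(δ/2)) := by rw [h3]; ring
      _ ≤ (2 / δ) * (t / tstar) ^ (-(max (2 * (p j - p i)) (δ / 2))) := by
          apply mul_le_mul_of_nonneg_left _ (by positivity)
          apply Real.rpow_le_rpow_of_exponent_ge hx0 hx1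
          exact neg_le_neg (le_max_right _ _)
    
  · rw [if_neg hpe, if_neg hpe]
    have hne : 2 * p i - 2 * p j ≠ 0 := fun h => hpe (by linarith)
    set e := 2 * p i - 2 * p j with hee
    rcases lt_or_gt_of_ne hne with hneg | hpos
    · -- e < 0 : |G| ≤ t^e/(-e) = tstar^e * (t/tstar)^e / (-e)
      have hmono : tstar ^ e ≤ t ^ e :=
        Real.rpow_le_rpow_of_nonpos ht hts (le_of_lt hneg)
      have habs : |(tstar ^ e - t ^ e) / e| = (t ^ e - tstar ^ e) / (-e) := by
        rw [abs_div, abs_of_neg hneg, abs_of_nonpos (by linarith)]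
        ring
      rw [habs]
      have hte : t ^ e = tstar ^ e * (t / tstar) ^ e := by
        rw [← Real.mul_rpow (le_of_lt htstar) (le_of_lt hx0)]
        congr 1
        field_simp
      have h5 : (t / tstar) ^ e ≤ (t / tstar) ^ (-(max (2 * (p j - p i)) (δ / 2))) := by
        apply Real.rpow_le_rpow_of_exponent_ge hx0 hx1
        have : 2 * (p j - p i) ≤ max (2 * (p j - p i)) (δ / 2) := le_max_left _ _
        simp only [hee]; linarith
      have htse : 0 < tstar ^ e := Real.rpow_pos_of_pos htstar e
      calc (t ^ e - tstar ^ e) / (-e) ≤ t ^ e / (-e) := by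
            apply div_le_div_of_nonneg_right _ (by linarith : (0:ℝ) ≤ -e)
            nlinarith [Real.rpow_pos_of_pos htstar e]
        _ = |e|⁻¹ * tstar ^ e * (t/tstar) ^ e := by
            rw [hte, abs_of_neg hneg]; ring
        _ ≤ |e|⁻¹ * tstar ^ e * (t / tstar) ^ (-(max (2 * (p j - p i)) (δ / 2))) := by
            apply mul_le_mul_of_nonneg_left h5 (by positivity)
    · -- e > 0
      have hmono : t ^ e ≤ tstar ^ e := by
        apply Real.rpow_le_rpow (le_of_lt ht) hts (le_of_lt hpos)
      have habs : |(tstar ^ e - t ^ e) / e| = (tstar ^ e - t ^ e) / e := by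
        rw [abs_div, abs_of_pos hpos, abs_of_nonneg (by linarith)]
      rw [habs]
      calc (tstar ^ e - t ^ e) / e ≤ tstar ^ e / e := by
            apply div_le_div_of_nonneg_right _ hpos.le
            nlinarith [Real.rpow_pos_of_pos ht e]
        _ = |e|⁻¹ * tstar ^ e * 1 := by rw [abs_of_pos hpos]; ring
        _ ≤ |e|⁻¹ * tstar ^ e * (t / tstar) ^ (-(max (2 * (p j - p i)) (δ / 2))) := by
            apply mul_le_mul_of_nonneg_left hxq1 (by positivity)

end glem


noncomputable def qex {D : ℕ} (p : Fin D → ℝ) (δ : ℝ) (i j : Fin D) : ℝ :=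
  max (2 * (p j - p i)) (δ / 2)

section counts
variable {D : ℕ} (p : Fin D → ℝ) (δ : ℝ) (hδ : 0 < δ)
  (hp1 : ∀ b, δ ≤ 1 - p b)
  (hsub : ∀ i j k : Fin D, j ≠ k → δ ≤ 1 + p i - p j - p k)

include hδ

lemma qex_pos (i j : Fin D) : 0 < qex p δ i j := lt_max_of_lt_right (by linarith)

lemma qex_diag (i : Fin D) : qex p δ i i = δ / 2 := by
  rw [qex]; rw [max_eq_right] <;> linarith

include hp1 hsub

lemma cnt1 {b i j : Fin D} (hbi : b ≠ i) (hbj : b ≠ j) :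
    δ + qex p δ j i ≤ (2 - 2 * p b) - qex p δ i j := by
  have h1 := hsub i b j hbj
  have h2 := hsub j b i hbi
  rcases max_cases (2 * (p i - p j)) (δ / 2) with ⟨e1, l1⟩ | ⟨e1, l1⟩ <;>
    rcases max_cases (2 * (p j - p i)) (δ / 2) with ⟨e2, l2⟩ | ⟨e2, l2⟩ <;>
    rw [qex, qex, e1, e2] <;> linarith [hp1 b, hp1 i, hp1 j]

lemma cnt2 (i : Fin D) : δ + qex p δ i i ≤ (2 - 2 * p i) - qex p δ i i := by
  rw [qex_diag p δ hδ]; linarith [hp1 i]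

lemma cnt3 {a i j : Fin D} (hai : a ≠ i) :
    δ + qex p δ j i ≤ (2 - 2 * p a) - qex p δ a j := by
  have h1 := hsub j a i hai
  rcases max_cases (2 * (p i - p j)) (δ / 2) with ⟨e1, l1⟩ | ⟨e1, l1⟩ <;>
    rcases max_cases (2 * (p j - p a)) (δ / 2) with ⟨e2, l2⟩ | ⟨e2, l2⟩ <;>
    rw [qex, qex, e1, e2] <;> linarith [hp1 a, hp1 i, hp1 j]

lemma cnt4 {b i j : Fin D} (hbj : b ≠ j) :
    δ + qex p δ j i ≤ (2 - 2 * p j) - qex p δ i b := by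
  have h1 := hsub i j b (Ne.symm hbj)
  rcases max_cases (2 * (p i - p j)) (δ / 2) with ⟨e1, l1⟩ | ⟨e1, l1⟩ <;>
    rcases max_cases (2 * (p b - p i)) (δ / 2) with ⟨e2, l2⟩ | ⟨e2, l2⟩ <;>
    rw [qex, qex, e1, e2] <;> linarith [hp1 b, hp1 i, hp1 j]

lemma cnt5 (i j : Fin D) : δ + qex p δ j i ≤ (2 - 2 * p j) + 3 * δ / 2 := by
  rcases max_cases (2 * (p i - p j)) (δ / 2) with ⟨e1, l1⟩ | ⟨e1, l1⟩ <;>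
    rw [qex, e1] <;> linarith [hp1 i, hp1 j]

lemma cnt6 (i j : Fin D) : δ + qex p δ j i ≤ (2 - 2 * p j) - δ / 2 := by
  rcases max_cases (2 * (p i - p j)) (δ / 2) with ⟨e1, l1⟩ | ⟨e1, l1⟩ <;>
    rw [qex, e1] <;> linarith [hp1 i, hp1 j]

lemma cntnu (a i : Fin D) : 3 * δ / 2 ≤ (2 - 2 * p a) - qex p δ a i := by
  rcases max_cases (2 * (p i - p a)) (δ / 2) with ⟨e1, l1⟩ | ⟨e1, l1⟩ <;>
    rw [qex, e1] <;> linarith [hp1 a, hp1 i]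

end counts

lemma hp1_of_hsub {D : ℕ} (hD : 2 ≤ D) (p : Fin D → ℝ) (δ : ℝ)
    (hsub : ∀ i j k : Fin D, j ≠ k → δ ≤ 1 + p i - p j - p k) :
    ∀ b, δ ≤ 1 - p b := by
  intro b
  have : 1 < Fintype.card (Fin D) := by rw [Fintype.card_fin]; omega
  obtain ⟨a, ha⟩ := Fintype.exists_ne_of_one_lt_card this b
  have := hsub a a b ha
  linarith


section ebounds
variable {D : ℕ} (p : Fin D → ℝ) (tstar : ℝ) (η κ : ℝ → Fin D → Fin D → ℝ)
  (φ ψ : ℝ → ℝ) (t : ℝ)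

lemma elow_nonneg (htstar : 0 < tstar) : 0 ≤ ElowSys p tstar η κ φ ψ t := by
  unfold ElowSys
  have : ∀ i ∈ Finset.univ, (0:ℝ) ≤ ∑ j, tstar ^ (-(2 * p (i : Fin D)) + 2 * p j)
      * ((κ t i j) ^ 2 + (UpsT p tstar η κ t i j) ^ 2) := by
    intro i _
    apply Finset.sum_nonneg
    intro j _
    positivity
  positivity

lemma elow_sq_sqrt (htstar : 0 < tstar) : Real.sqrt (ElowSys p tstar η κ φ ψ t) ^ 2
    = ElowSys p tstar η κ φ ψ t :=
  Real.sq_sqrt (elow_nonneg p tstar η κ φ ψ t htstar)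

lemma elow_term_le (htstar : 0 < tstar) (i j : Fin D) :
    tstar ^ (-(2 * p i) + 2 * p j) * ((κ t i j) ^ 2 + (UpsT p tstar η κ t i j) ^ 2)
      ≤ ElowSys p tstar η κ φ ψ t := by
  unfold ElowSys
  have h1 : tstar ^ (-(2 * p i) + 2 * p j) * ((κ t i j) ^ 2 + (UpsT p tstar η κ t i j) ^ 2)
      ≤ ∑ j', tstar ^ (-(2 * p i) + 2 * p j') * ((κ t i j') ^ 2 + (UpsT p tstar η κ t i j') ^ 2) := by
    apply Finset.single_le_sum (f := fun j' => tstar ^ (-(2 * p i) + 2 * p j')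
      * ((κ t i j') ^ 2 + (UpsT p tstar η κ t i j') ^ 2)) _ (Finset.mem_univ j)
    intro k _; positivity
  have h2 : ∑ j', tstar ^ (-(2 * p i) + 2 * p j') * ((κ t i j') ^ 2 + (UpsT p tstar η κ t i j') ^ 2)
      ≤ ∑ i', ∑ j', tstar ^ (-(2 * p i') + 2 * p j') * ((κ t i' j') ^ 2 + (UpsT p tstar η κ t i' j') ^ 2) := by
    apply Finset.single_le_sum (f := fun i' => ∑ j', tstar ^ (-(2 * p i') + 2 * p j')
      * ((κ t i' j') ^ 2 + (UpsT p tstar η κ t i' j') ^ 2)) _ (Finset.mem_univ i)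
    intro k _
    apply Finset.sum_nonneg; intro l _; positivity
  nlinarith [sq_nonneg (ψ t), sq_nonneg (phiT φ ψ tstar t)]

lemma comp_le_of_sq (htstar : 0 < tstar) (a : ℝ) (e : ℝ)
    (h : tstar ^ (-e) * a ^ 2 ≤ ElowSys p tstar η κ φ ψ t) :
    |a| ≤ tstar ^ (e / 2) * Real.sqrt (ElowSys p tstar η κ φ ψ t) := by
  set S := Real.sqrt (ElowSys p tstar η κ φ ψ t) with hS
  have hS2 : S ^ 2 = ElowSys p tstar η κ φ ψ t := elow_sq_sqrt p tstar η κ φ ψ t htstar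
  have ha2 : a ^ 2 ≤ tstar ^ e * S ^ 2 := by
    have hpos : 0 < tstar ^ (-e) := Real.rpow_pos_of_pos htstar _
    have h3 : tstar ^ e * (tstar ^ (-e) * a ^ 2) ≤ tstar ^ e * S ^ 2 := by
      rw [hS2]
      exact mul_le_mul_of_nonneg_left h (le_of_lt (Real.rpow_pos_of_pos htstar _))
    calc a ^ 2 = tstar ^ e * (tstar ^ (-e) * a ^ 2) := by
          rw [← mul_assoc, ← Real.rpow_add htstar]
          simp
      _ ≤ tstar ^ e * S ^ 2 := h3
  have he : tstar ^ e * S ^ 2 = (tstar ^ (e/2) * S) ^ 2 := by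
    rw [mul_pow, ← Real.rpow_natCast (tstar ^ (e/2)) 2, ← Real.rpow_mul (le_of_lt htstar)]
    norm_num
  calc |a| = Real.sqrt (a ^ 2) := (Real.sqrt_sq_eq_abs a).symm
    _ ≤ Real.sqrt ((tstar ^ (e/2) * S) ^ 2) := by
        apply Real.sqrt_le_sqrt; rw [← he]; exact ha2
    _ = tstar ^ (e/2) * S := Real.sqrt_sq (by positivity)

lemma kappa_comp_bound (htstar : 0 < tstar) (i j : Fin D) :
    |κ t i j| ≤ tstar ^ (p i - p j) * Real.sqrt (ElowSys p tstar η κ φ ψ t) := by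
  have h := elow_term_le p tstar η κ φ ψ t htstar i j
  have := comp_le_of_sq p tstar η κ φ ψ t htstar (κ t i j) (2 * p i - 2 * p j)
    (by
      calc tstar ^ (-(2 * p i - 2 * p j)) * κ t i j ^ 2
          ≤ tstar ^ (-(2 * p i) + 2 * p j) * ((κ t i j) ^ 2 + (UpsT p tstar η κ t i j) ^ 2) := by
            rw [show -(2 * p i - 2 * p j) = -(2*p i) + 2*p j by ring]
            nlinarith [sq_nonneg (UpsT p tstar η κ t i j), Real.rpow_pos_of_pos htstar (-(2*p i)+2*p j)]
        _ ≤ _ := h)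
  calc |κ t i j| ≤ tstar ^ ((2*p i - 2*p j)/2) * Real.sqrt (ElowSys p tstar η κ φ ψ t) := this
    _ = tstar ^ (p i - p j) * Real.sqrt (ElowSys p tstar η κ φ ψ t) := by
        rw [show (2*p i - 2*p j)/2 = p i - p j by ring]

lemma ups_comp_bound (htstar : 0 < tstar) (i j : Fin D) :
    |UpsT p tstar η κ t i j| ≤ tstar ^ (p i - p j) * Real.sqrt (ElowSys p tstar η κ φ ψ t) := by
  have h := elow_term_le p tstar η κ φ ψ t htstar i j
  have := comp_le_of_sq p tstar η κ φ ψ t htstar (UpsT p tstar η κ t i j) (2 * p i - 2 * p j)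
    (by
      calc tstar ^ (-(2 * p i - 2 * p j)) * UpsT p tstar η κ t i j ^ 2
          ≤ tstar ^ (-(2 * p i) + 2 * p j) * ((κ t i j) ^ 2 + (UpsT p tstar η κ t i j) ^ 2) := by
            rw [show -(2 * p i - 2 * p j) = -(2*p i) + 2*p j by ring]
            nlinarith [sq_nonneg (κ t i j), Real.rpow_pos_of_pos htstar (-(2*p i)+2*p j)]
        _ ≤ _ := h)
  calc |UpsT p tstar η κ t i j| ≤ tstar ^ ((2*p i - 2*p j)/2) * Real.sqrt (ElowSys p tstar η κ φ ψ t) := this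
    _ = _ := by rw [show (2*p i - 2*p j)/2 = p i - p j by ring]

lemma psi_comp_bound (htstar : 0 < tstar) : |ψ t| ≤ Real.sqrt (ElowSys p tstar η κ φ ψ t) := by
  rw [← Real.sqrt_sq_eq_abs]
  apply Real.sqrt_le_sqrt
  have h1 : (0:ℝ) ≤ ∑ i, ∑ j, tstar ^ (-(2 * p (i:Fin D)) + 2 * p j)
      * ((κ t i j) ^ 2 + (UpsT p tstar η κ t i j) ^ 2) := by
    apply Finset.sum_nonneg; intro i _
    apply Finset.sum_nonneg; intro j _; positivity
  unfold ElowSys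
  nlinarith [sq_nonneg (phiT φ ψ tstar t)]

lemma phiT_comp_bound (htstar : 0 < tstar) : |phiT φ ψ tstar t| ≤ Real.sqrt (ElowSys p tstar η κ φ ψ t) := by
  rw [← Real.sqrt_sq_eq_abs]
  apply Real.sqrt_le_sqrt
  have h1 : (0:ℝ) ≤ ∑ i, ∑ j, tstar ^ (-(2 * p (i:Fin D)) + 2 * p j)
      * ((κ t i j) ^ 2 + (UpsT p tstar η κ t i j) ^ 2) := by
    apply Finset.sum_nonneg; intro i _
    apply Finset.sum_nonneg; intro j _; positivity
  unfold ElowSys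
  nlinarith [sq_nonneg (ψ t)]

end ebounds


section atom
variable {D : ℕ} (p : Fin D → ℝ) (δ : ℝ)

/-- t^α·|λu λv| ≤ x^α · tstar^(α-2+pu+pv), where x = t/tstar. -/
lemma coeff_bound (lam : Fin D → ℤ) {t tstar : ℝ} (ht : 0 < t) (hts : t ≤ tstar)
    (hwab : ∀ b, tstar ^ (1 - p b) * |(lam b : ℝ)| ≤ 1) (α : ℝ) (u v : Fin D) :
    t ^ α * |(lam u : ℝ)| * |(lam v : ℝ)| ≤
      (t / tstar) ^ α * tstar ^ (α - 2 + p u + p v) := by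
  have htstar : 0 < tstar := lt_of_lt_of_le ht hts
  have hx0 : 0 < t / tstar := div_pos ht htstar
  have hts' : t ^ α = (t / tstar) ^ α * tstar ^ α := by
    rw [← Real.mul_rpow (le_of_lt hx0) (le_of_lt htstar)]
    congr 1
    field_simp
  have hdecomp : tstar ^ α = tstar ^ (α - 2 + p u + p v) * (tstar ^ (1 - p u) * tstar ^ (1 - p v)) := by
    rw [← Real.rpow_add htstar, ← Real.rpow_add htstar]
    congr 1
    ring
  rw [hts', hdecomp]
  have h1 : (0:ℝ) ≤ (t/tstar) ^ α * tstar ^ (α - 2 + p u + p v) := by positivity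
  calc (t / tstar) ^ α * (tstar ^ (α - 2 + p u + p v) * (tstar ^ (1 - p u) * tstar ^ (1 - p v)))
        * |(lam u : ℝ)| * |(lam v : ℝ)|
      = ((t/tstar) ^ α * tstar ^ (α - 2 + p u + p v)) *
        ((tstar ^ (1 - p u) * |(lam u : ℝ)|) * (tstar ^ (1 - p v) * |(lam v : ℝ)|)) := by ring
    _ ≤ ((t/tstar) ^ α * tstar ^ (α - 2 + p u + p v)) * (1 * 1) := by
        apply mul_le_mul_of_nonneg_left _ h1
        apply mul_le_mul (hwab u) (hwab v) (by positivity) (by linarith [hwab u, abs_nonneg ((lam u : ℝ)), Real.rpow_pos_of_pos htstar (1 - p u)])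
    _ = (t/tstar) ^ α * tstar ^ (α - 2 + p u + p v) := by ring

lemma eta_atom (lam : Fin D → ℤ) {t tstar K' S : ℝ} (ht : 0 < t) (hts : t ≤ tstar)
    (hK' : 0 ≤ K') (hS : 0 ≤ S)
    (hwab : ∀ b, tstar ^ (1 - p b) * |(lam b : ℝ)| ≤ 1)
    (ηv : ℝ) (α : ℝ) (u v c d : Fin D)
    (hη : |ηv| ≤ K' * (t / tstar) ^ (-(qex p δ c d)) * tstar ^ (p c - p d) * S) :
    |t ^ α * (lam u : ℝ) * (lam v : ℝ) * ηv| ≤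
      K' * (t / tstar) ^ (α - qex p δ c d) * tstar ^ (α - 2 + p u + p v + (p c - p d)) * S := by
  have htstar : 0 < tstar := lt_of_lt_of_le ht hts
  have hx0 : 0 < t / tstar := div_pos ht htstar
  rw [abs_mul, abs_mul, abs_mul, abs_of_nonneg (le_of_lt (Real.rpow_pos_of_pos ht α))]
  calc t ^ α * |(lam u : ℝ)| * |(lam v : ℝ)| * |ηv|
      ≤ ((t/tstar) ^ α * tstar ^ (α - 2 + p u + p v)) *
        (K' * (t / tstar) ^ (-(qex p δ c d)) * tstar ^ (p c - p d) * S) := by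
        apply mul_le_mul (coeff_bound p lam ht hts hwab α u v) hη (abs_nonneg _) (by positivity)
    _ = K' * ((t/tstar) ^ α * (t / tstar) ^ (-(qex p δ c d))) *
        (tstar ^ (α - 2 + p u + p v) * tstar ^ (p c - p d)) * S := by ring
    _ = K' * (t / tstar) ^ (α - qex p δ c d) * tstar ^ (α - 2 + p u + p v + (p c - p d)) * S := by
        rw [← Real.rpow_add hx0, ← Real.rpow_add htstar]
        ring_nf

/-- final comparison: pass to target exponent δ + qex j i and tstar-weight p i - p j -/
lemma atom_final {t tstar K' S : ℝ} (ht : 0 < t) (hts : t ≤ tstar)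
    (hK' : 0 ≤ K') (hS : 0 ≤ S) {e1 e2 w1 w2 : ℝ} (he : e2 ≤ e1) (hw : w1 = w2)
    {A : ℝ} (hA : A ≤ K' * (t / tstar) ^ e1 * tstar ^ w1 * S) :
    A ≤ K' * (t / tstar) ^ e2 * tstar ^ w2 * S := by
  have htstar : 0 < tstar := lt_of_lt_of_le ht hts
  have hx0 : 0 < t / tstar := div_pos ht htstar
  have hx1 : t / tstar ≤ 1 := (div_le_one htstar).2 hts
  calc A ≤ K' * (t / tstar) ^ e1 * tstar ^ w1 * S := hA
    _ ≤ K' * (t / tstar) ^ e2 * tstar ^ w2 * S := by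
        rw [← hw]
        have hxx := Real.rpow_le_rpow_of_exponent_ge hx0 hx1 he
        gcongr

end atom


-- Constants
noncomputable def KGc {D : ℕ} (p : Fin D → ℝ) (δ : ℝ) : ℝ :=
  2 / δ + ∑ i, ∑ j, (if p i = p j then 0 else |2 * p i - 2 * p j|⁻¹)

noncomputable def Kpc {D : ℕ} (p : Fin D → ℝ) (δ : ℝ) : ℝ := 1 + KGc p δ

noncomputable def Cnuc (D : ℕ) (p : Fin D → ℝ) (δ : ℝ) : ℝ :=
  (2 * D + 2 * D ^ 2) * Kpc p δ

section constants
variable {D : ℕ} (p : Fin D → ℝ) (δ : ℝ) (hδ : 0 < δ)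

include hδ

lemma KGc_pos : 0 < KGc p δ := by
  unfold KGc
  have : (0:ℝ) ≤ ∑ i, ∑ j, (if p i = p j then 0 else |2 * p (i: Fin D) - 2 * p j|⁻¹) := by
    apply Finset.sum_nonneg; intro i _
    apply Finset.sum_nonneg; intro j _
    split <;> positivity
  have h2 : (0:ℝ) < 2 / δ := by positivity
  linarith

lemma KGc_ge (i j : Fin D) :
    (if p i = p j then 2 / δ else |2 * p i - 2 * p j|⁻¹) ≤ KGc p δ := by
  have hnn : ∀ a b : Fin D, (0:ℝ) ≤ (if p a = p b then 0 else |2 * p a - 2 * p b|⁻¹) := by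
    intro a b; split <;> positivity
  unfold KGc
  by_cases h : p i = p j
  · rw [if_pos h]
    have : (0:ℝ) ≤ ∑ a, ∑ b, (if p a = p b then 0 else |2 * p (a: Fin D) - 2 * p b|⁻¹) := by
      apply Finset.sum_nonneg; intro a _; apply Finset.sum_nonneg; intro b _; exact hnn a b
    linarith
  · rw [if_neg h]
    have h1 : (if p i = p j then (0:ℝ) else |2 * p i - 2 * p j|⁻¹) ≤
        ∑ b, (if p i = p b then (0:ℝ) else |2 * p i - 2 * p b|⁻¹) :=
      Finset.single_le_sum (fun b _ => hnn i b) (Finset.mem_univ j)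
    have h2 : ∑ b, (if p i = p b then (0:ℝ) else |2 * p i - 2 * p b|⁻¹) ≤
        ∑ a, ∑ b, (if p a = p b then (0:ℝ) else |2 * p (a:Fin D) - 2 * p b|⁻¹) :=
      Finset.single_le_sum (fun a _ => Finset.sum_nonneg (fun b _ => hnn a b)) (Finset.mem_univ i)
    rw [if_neg h] at h1
    have h3 : (0:ℝ) ≤ 2 / δ := by positivity
    linarith

lemma Kpc_pos : 0 < Kpc p δ := by
  have := KGc_pos p δ hδ; unfold Kpc; linarith

lemma Cnuc_pos (hD : 2 ≤ D) : 0 < Cnuc D p δ := by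
  have := Kpc_pos p δ hδ
  have : (0:ℝ) < 2 * D + 2 * D ^ 2 := by positivity
  unfold Cnuc
  positivity

end constants

section weights
variable {D : ℕ} {p : Fin D → ℝ} {lam : Fin D → ℤ} {tstar : ℝ}

lemma weights_sum (htstar : 0 < tstar) (htau : tau p lam tstar = 1) :
    ∑ b, tstar ^ (2 - 2 * p b) * ((lam b : ℝ)) ^ 2 = 1 := by
  have h := congrArg (fun y => y ^ 2) htau
  simp only [one_pow] at h
  rw [tau, Real.sq_sqrt] at h
  · exact h
  · apply Finset.sum_nonneg; intro b _; positivity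

lemma weights_le_one (htstar : 0 < tstar) (htau : tau p lam tstar = 1) (b : Fin D) :
    tstar ^ (2 - 2 * p b) * ((lam b : ℝ)) ^ 2 ≤ 1 := by
  rw [← weights_sum htstar htau]
  apply Finset.single_le_sum (f := fun b => tstar ^ (2 - 2 * p (b : Fin D)) * ((lam b : ℝ)) ^ 2)
    _ (Finset.mem_univ b)
  intro c _
  positivity

lemma weights_abs_le_one (htstar : 0 < tstar) (htau : tau p lam tstar = 1) (b : Fin D) :
    tstar ^ (1 - p b) * |(lam b : ℝ)| ≤ 1 := by
  have h := weights_le_one htstar htau b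
  have hsq : (tstar ^ (1 - p b) * |(lam b : ℝ)|) ^ 2 = tstar ^ (2 - 2 * p b) * ((lam b : ℝ)) ^ 2 := by
    rw [mul_pow, sq_abs]
    congr 1
    rw [← Real.rpow_natCast (tstar ^ (1 - p b)) 2, ← Real.rpow_mul htstar.le]
    congr 1
    push_cast
    ring
  nlinarith [Real.rpow_pos_of_pos htstar (1 - p b), abs_nonneg ((lam b : ℝ)),
    mul_nonneg (Real.rpow_pos_of_pos htstar (1 - p b)).le (abs_nonneg ((lam b : ℝ)))]

lemma tau_sq_eq {t : ℝ} (ht : 0 ≤ t) :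
    tau p lam t ^ 2 = ∑ b, t ^ (2 - 2 * p b) * ((lam b : ℝ)) ^ 2 := by
  rw [tau, Real.sq_sqrt]
  apply Finset.sum_nonneg; intro b _
  have : (0:ℝ) ≤ t ^ (2 - 2 * p (b : Fin D)) := Real.rpow_nonneg ht _
  positivity

lemma t_rpow_split {t : ℝ} (ht : 0 < t) (hts : t ≤ tstar) (α : ℝ) :
    t ^ α = (t / tstar) ^ α * tstar ^ α := by
  have htstar : 0 < tstar := lt_of_lt_of_le ht hts
  rw [← Real.mul_rpow (by positivity) htstar.le]
  congr 1
  field_simp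

lemma tau_sq_le {δ : ℝ} (hδ : 0 < δ) (hp1 : ∀ b, δ ≤ 1 - p b)
    {t : ℝ} (ht : 0 < t) (hts : t ≤ tstar) (htau : tau p lam tstar = 1) :
    tau p lam t ^ 2 ≤ (t / tstar) ^ (2 * δ) := by
  have htstar : 0 < tstar := lt_of_lt_of_le ht hts
  have hx0 : 0 < t / tstar := div_pos ht htstar
  have hx1 : t / tstar ≤ 1 := (div_le_one htstar).2 hts
  rw [tau_sq_eq ht.le]
  calc ∑ b, t ^ (2 - 2 * p b) * ((lam b : ℝ)) ^ 2
      ≤ ∑ b, (t / tstar) ^ (2 * δ) * (tstar ^ (2 - 2 * p b) * ((lam b : ℝ)) ^ 2) := by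
        apply Finset.sum_le_sum
        intro b _
        rw [t_rpow_split ht hts]
        have h1 : (t/tstar) ^ (2 - 2 * p b) ≤ (t/tstar) ^ (2*δ) :=
          Real.rpow_le_rpow_of_exponent_ge hx0 hx1 (by linarith [hp1 b])
        have h2 : (0:ℝ) ≤ tstar ^ (2 - 2*p b) * ((lam b:ℝ))^2 := by positivity
        calc (t / tstar) ^ (2 - 2*p b) * tstar ^ (2 - 2*p b) * (lam b : ℝ)^2
            = (t / tstar) ^ (2 - 2*p b) * (tstar ^ (2 - 2*p b) * (lam b : ℝ)^2) := by ring
          _ ≤ (t/tstar) ^ (2*δ) * (tstar ^ (2 - 2*p b) * (lam b : ℝ)^2) := by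
              apply mul_le_mul_of_nonneg_right h1 h2
    _ = (t / tstar) ^ (2*δ) := by
        rw [← Finset.mul_sum, weights_sum htstar htau, mul_one]

end weights


section etanu
variable {D : ℕ} {p : Fin D → ℝ} {pphi δ : ℝ} {lam : Fin D → ℤ} {tstar : ℝ}
  {η κ : ℝ → Fin D → Fin D → ℝ} {φ ψ ν : ℝ → ℝ} {t : ℝ}

lemma eta_bound (hδ : 0 < δ) (ht0 : 0 < t) (hts : t ≤ tstar) (c d : Fin D) :
    |η t c d| ≤ Kpc p δ * (t / tstar) ^ (-(qex p δ c d)) * tstar ^ (p c - p d)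
      * Real.sqrt (ElowSys p tstar η κ φ ψ t) := by
  have htstar : 0 < tstar := lt_of_lt_of_le ht0 hts
  set S := Real.sqrt (ElowSys p tstar η κ φ ψ t) with hSdef
  have hS0 : 0 ≤ S := Real.sqrt_nonneg _
  have hx0 : 0 < t / tstar := div_pos ht0 htstar
  have hx1 : t / tstar ≤ 1 := (div_le_one htstar).2 hts
  have hq0 : 0 < qex p δ c d := qex_pos p δ hδ c d
  have hxq : (1:ℝ) ≤ (t / tstar) ^ (-(qex p δ c d)) := by
    calc (1:ℝ) = (t / tstar) ^ (0:ℝ) := (Real.rpow_zero _).symm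
    _ ≤ _ := Real.rpow_le_rpow_of_exponent_ge hx0 hx1 (by linarith)
  have hG : |Gfun p tstar c d t| ≤ KGc p δ * tstar ^ (2 * p c - 2 * p d)
      * (t / tstar) ^ (-(qex p δ c d)) := by
    have h1 := Gfun_bound p tstar c d hδ htstar ht0 hts
    have h2 := KGc_ge p δ hδ c d
    rw [qex]
    calc |Gfun p tstar c d t| ≤ (if p c = p d then 2 / δ else |2 * p c - 2 * p d|⁻¹)
          * tstar ^ (2 * p c - 2 * p d) * (t / tstar) ^ (-(max (2 * (p d - p c)) (δ / 2))) := h1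
      _ ≤ _ := by
          apply mul_le_mul_of_nonneg_right _ (by positivity)
          apply mul_le_mul_of_nonneg_right h2 (by positivity)
  have hκb : |κ t d c| ≤ tstar ^ (p d - p c) * S :=
    kappa_comp_bound p tstar η κ φ ψ t htstar d c
  have hUb : |UpsT p tstar η κ t c d| ≤ tstar ^ (p c - p d) * S :=
    ups_comp_bound p tstar η κ φ ψ t htstar c d
  have hηeq : η t c d = UpsT p tstar η κ t c d - Gfun p tstar c d t * κ t d c := by
    rw [UpsT]; ring
  have hw2 : tstar ^ (2 * p c - 2 * p d) * tstar ^ (p d - p c) = tstar ^ (p c - p d) := by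
    rw [← Real.rpow_add htstar]; congr 1; ring
  calc |η t c d| ≤ |UpsT p tstar η κ t c d| + |Gfun p tstar c d t| * |κ t d c| := by
        rw [hηeq]; calc _ ≤ |UpsT p tstar η κ t c d| + |Gfun p tstar c d t * κ t d c| :=
                      abs_sub _ _
          _ = _ := by rw [abs_mul]
    _ ≤ tstar ^ (p c - p d) * S +
        (KGc p δ * tstar ^ (2 * p c - 2 * p d) * (t / tstar) ^ (-(qex p δ c d))) *
          (tstar ^ (p d - p c) * S) := by
        apply add_le_add hUb
        have hKG0 : 0 ≤ KGc p δ := (KGc_pos p δ hδ).le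
        apply mul_le_mul hG hκb (abs_nonneg _)
          (mul_nonneg (mul_nonneg hKG0 (by positivity)) (by positivity))
    _ = tstar ^ (p c - p d) * S + KGc p δ * (t / tstar) ^ (-(qex p δ c d))
          * (tstar ^ (2 * p c - 2 * p d) * tstar ^ (p d - p c)) * S := by ring
    _ = tstar ^ (p c - p d) * S + KGc p δ * (t / tstar) ^ (-(qex p δ c d))
          * tstar ^ (p c - p d) * S := by rw [hw2]
    _ ≤ (t / tstar) ^ (-(qex p δ c d)) * tstar ^ (p c - p d) * S + KGc p δ
          * (t / tstar) ^ (-(qex p δ c d)) * tstar ^ (p c - p d) * S := by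
        have : (0:ℝ) ≤ tstar ^ (p c - p d) * S := by positivity
        nlinarith
    _ = Kpc p δ * (t / tstar) ^ (-(qex p δ c d)) * tstar ^ (p c - p d) * S := by
        rw [Kpc]; ring

lemma abs_le_mul_abs_of_one_le {a b : ℝ} (h : 1 ≤ b) : |a| ≤ b * |a| := by
  nlinarith [abs_nonneg a]

lemma nu_bound (hD : 2 ≤ D) (hδ : 0 < δ) (hp1 : ∀ b, δ ≤ 1 - p b)
    (hsub : ∀ i j k : Fin D, j ≠ k → δ ≤ 1 + p i - p j - p k)
    (htau : tau p lam tstar = 1)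
    (sol : IsCMCTCSolution p pphi lam η κ φ ψ ν (Set.Ioc 0 tstar))
    (ht : t ∈ Set.Ioc (0:ℝ) tstar) :
    |ν t| ≤ Cnuc D p δ * (t / tstar) ^ (3 * δ / 2)
      * Real.sqrt (ElowSys p tstar η κ φ ψ t) := by
  obtain ⟨ht0, hts⟩ := ht
  have htstar : 0 < tstar := lt_of_lt_of_le ht0 hts
  set S := Real.sqrt (ElowSys p tstar η κ φ ψ t) with hSdef
  have hS0 : 0 ≤ S := Real.sqrt_nonneg _
  have hx0 : 0 < t / tstar := div_pos ht0 htstar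
  have hx1 : t / tstar ≤ 1 := (div_le_one htstar).2 hts
  have hKp : 0 < Kpc p δ := Kpc_pos p δ hδ
  have hell := sol.nu_elliptic t ⟨ht0, hts⟩
  have hτ0 : (0:ℝ) ≤ tau p lam t ^ 2 := sq_nonneg _
  have h1 : |ν t| ≤ |(1 + tau p lam t ^ 2) * ν t| := by
    rw [abs_mul, abs_of_pos (by linarith : (0:ℝ) < 1 + tau p lam t ^ 2)]
    nlinarith [abs_nonneg (ν t)]
  rw [hell] at h1
  -- bound trace part
  have htr : |∑ a, η t a a| ≤ D * (Kpc p δ * (t / tstar) ^ (-(δ/2)) * S) := by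
    calc |∑ a, η t a a| ≤ ∑ a, |η t a a| := Finset.abs_sum_le_sum_abs _ _
      _ ≤ ∑ _a : Fin D, Kpc p δ * (t / tstar) ^ (-(δ/2)) * S := by
          apply Finset.sum_le_sum
          intro a _
          have h := eta_bound (p := p) (η := η) (κ := κ) (φ := φ) (ψ := ψ) hδ ht0 hts a a
          rw [qex_diag p δ hδ, show p a - p a = (0:ℝ) by ring, Real.rpow_zero, mul_one] at h
          exact h
      _ = D * (Kpc p δ * (t / tstar) ^ (-(δ/2)) * S) := by
          rw [Finset.sum_const, Finset.card_univ, Fintype.card_fin, nsmul_eq_mul]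
  have hτx : tau p lam t ^ 2 ≤ (t / tstar) ^ (2*δ) := tau_sq_le hδ hp1 ht0 hts htau
  have hA : |2 * tau p lam t ^ 2 * (∑ a, η t a a)| ≤
      2 * D * Kpc p δ * (t / tstar) ^ (3*δ/2) * S := by
    rw [abs_mul, abs_mul, abs_of_nonneg (by norm_num : (0:ℝ) ≤ 2), abs_of_nonneg hτ0]
    have hstep : tau p lam t ^ 2 * |∑ a, η t a a| ≤
        (t / tstar) ^ (2*δ) * (D * (Kpc p δ * (t / tstar) ^ (-(δ/2)) * S)) := by
      apply mul_le_mul hτx htr (abs_nonneg _) (by positivity)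
    have hcomb : (t / tstar) ^ (2*δ) * (t / tstar) ^ (-(δ/2)) = (t / tstar) ^ (3*δ/2) := by
      rw [← Real.rpow_add hx0]; congr 1; ring
    calc 2 * tau p lam t ^ 2 * |∑ a, η t a a|
        ≤ 2 * ((t / tstar) ^ (2*δ) * (D * (Kpc p δ * (t / tstar) ^ (-(δ/2)) * S))) := by
          nlinarith [htr, hτx, abs_nonneg (∑ a, η t a a), hτ0]
      _ = 2 * D * Kpc p δ * ((t / tstar) ^ (2*δ) * (t / tstar) ^ (-(δ/2))) * S := by ring
      _ = 2 * D * Kpc p δ * (t / tstar) ^ (3*δ/2) * S := by rw [hcomb]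
  have hB : |2 * ∑ a, ∑ i, t ^ (2 - 2 * p a) * (lam a : ℝ) * (lam i : ℝ) * η t a i| ≤
      2 * D^2 * Kpc p δ * (t / tstar) ^ (3*δ/2) * S := by
    have hOne : ∀ a i : Fin D, |t ^ (2 - 2 * p a) * (lam a : ℝ) * (lam i : ℝ) * η t a i| ≤
        Kpc p δ * (t / tstar) ^ (3*δ/2) * S := by
      intro a i
      have hat := eta_atom p δ lam ht0 hts hKp.le hS0
        (weights_abs_le_one htstar htau) (η t a i) (2 - 2 * p a) a i a i
        (eta_bound (p := p) (η := η) (κ := κ) (φ := φ) (ψ := ψ) hδ ht0 hts a i)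
      have hfin := atom_final ht0 hts hKp.le hS0
        (e1 := (2 - 2*p a) - qex p δ a i) (e2 := 3*δ/2)
        (w1 := (2 - 2*p a) - 2 + p a + p i + (p a - p i)) (w2 := 0)
        (cntnu p δ hδ hp1 hsub a i) (by ring) hat
      rw [Real.rpow_zero, mul_one] at hfin
      exact hfin
    calc |2 * ∑ a, ∑ i, t ^ (2 - 2 * p a) * (lam a : ℝ) * (lam i : ℝ) * η t a i|
        = 2 * |∑ a, ∑ i, t ^ (2 - 2 * p a) * (lam a : ℝ) * (lam i : ℝ) * η t a i| := by
          rw [abs_mul]; norm_num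
      _ ≤ 2 * ∑ a, ∑ i, |t ^ (2 - 2 * p a) * (lam a : ℝ) * (lam i : ℝ) * η t a i| := by
          have := Finset.abs_sum_le_sum_abs
            (fun a => ∑ i, t ^ (2 - 2 * p (a : Fin D)) * (lam a : ℝ) * (lam i : ℝ) * η t a i)
            Finset.univ
          have h2 : ∑ a, |∑ i, t ^ (2 - 2 * p (a:Fin D)) * (lam a : ℝ) * (lam i : ℝ) * η t a i|
              ≤ ∑ a, ∑ i, |t ^ (2 - 2 * p (a:Fin D)) * (lam a : ℝ) * (lam i : ℝ) * η t a i| := by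
            apply Finset.sum_le_sum
            intro a _
            exact Finset.abs_sum_le_sum_abs _ _
          linarith
      _ ≤ 2 * ∑ _a : Fin D, ∑ _i : Fin D, Kpc p δ * (t / tstar) ^ (3*δ/2) * S := by
          have h3 : ∀ a : Fin D, ∑ i, |t ^ (2 - 2 * p a) * (lam a : ℝ) * (lam i : ℝ) * η t a i|
              ≤ ∑ _i : Fin D, Kpc p δ * (t / tstar) ^ (3*δ/2) * S := by
            intro a
            apply Finset.sum_le_sum
            intro i _
            exact hOne a i
          have h4 : ∑ a, ∑ i, |t ^ (2 - 2 * p (a : Fin D)) * (lam a : ℝ) * (lam i : ℝ) * η t a i|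
              ≤ ∑ _a : Fin D, ∑ _i : Fin D, Kpc p δ * (t / tstar) ^ (3*δ/2) * S := by
            apply Finset.sum_le_sum
            intro a _
            exact h3 a
          linarith
      _ = 2 * D^2 * Kpc p δ * (t / tstar) ^ (3*δ/2) * S := by
          rw [Finset.sum_const, Finset.sum_const, Finset.card_univ, Fintype.card_fin,
            nsmul_eq_mul, nsmul_eq_mul]
          ring
  calc |ν t| ≤ |2 * tau p lam t ^ 2 * (∑ a, η t a a)
        - 2 * ∑ a, ∑ i, t ^ (2 - 2 * p a) * (lam a : ℝ) * (lam i : ℝ) * η t a i| := h1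
    _ ≤ |2 * tau p lam t ^ 2 * (∑ a, η t a a)|
        + |2 * ∑ a, ∑ i, t ^ (2 - 2 * p a) * (lam a : ℝ) * (lam i : ℝ) * η t a i| :=
          abs_sub _ _
    _ ≤ 2 * D * Kpc p δ * (t / tstar) ^ (3*δ/2) * S
        + 2 * D^2 * Kpc p δ * (t / tstar) ^ (3*δ/2) * S := add_le_add hA hB
    _ = Cnuc D p δ * (t / tstar) ^ (3*δ/2) * S := by
        rw [Cnuc]; ring

end etanu


noncomputable def C1c (D : ℕ) (p : Fin D → ℝ) (δ : ℝ) : ℝ :=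
  (4 * D + 2) * Kpc p δ + 2 * Cnuc D p δ

section kx
variable {D : ℕ} {p : Fin D → ℝ} {pphi δ : ℝ} {lam : Fin D → ℤ} {tstar : ℝ}
  {η κ : ℝ → Fin D → Fin D → ℝ} {φ ψ ν : ℝ → ℝ} {t : ℝ}

lemma abs_le_seven (a1 a2 a3 a4 a5 a6 a7 : ℝ) :
    |a1 + a2 + a3 + a4 + a5 + a6 + a7| ≤ |a1| + |a2| + |a3| + |a4| + |a5| + |a6| + |a7| := by
  calc |a1 + a2 + a3 + a4 + a5 + a6 + a7| ≤ |a1 + a2 + a3 + a4 + a5 + a6| + |a7| := abs_add_le _ _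
    _ ≤ |a1 + a2 + a3 + a4 + a5| + |a6| + |a7| := by linarith [abs_add_le (a1+a2+a3+a4+a5) a6]
    _ ≤ |a1 + a2 + a3 + a4| + |a5| + |a6| + |a7| := by linarith [abs_add_le (a1+a2+a3+a4) a5]
    _ ≤ |a1 + a2 + a3| + |a4| + |a5| + |a6| + |a7| := by linarith [abs_add_le (a1+a2+a3) a4]
    _ ≤ |a1 + a2| + |a3| + |a4| + |a5| + |a6| + |a7| := by linarith [abs_add_le (a1+a2) a3]
    _ ≤ |a1| + |a2| + |a3| + |a4| + |a5| + |a6| + |a7| := by linarith [abs_add_le a1 a2]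

lemma sum_abs_le_card_mul {s : Finset (Fin D)} (f : Fin D → ℝ) (M : ℝ) (hM : 0 ≤ M)
    (h : ∀ b ∈ s, |f b| ≤ M) : |∑ b ∈ s, f b| ≤ (D : ℝ) * M := by
  calc |∑ b ∈ s, f b| ≤ ∑ b ∈ s, |f b| := Finset.abs_sum_le_sum_abs _ _
    _ ≤ s.card • M := Finset.sum_le_card_nsmul s _ M (fun b hb => h b hb)
    _ = (s.card : ℝ) * M := nsmul_eq_mul _ _
    _ ≤ (D : ℝ) * M := by
        have hc : s.card ≤ D := by
          simpa using Finset.card_le_univ s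
        exact mul_le_mul_of_nonneg_right (by exact_mod_cast hc) hM

/-- Bound on the κ-evolution numerator. -/
lemma Kx_bound (hD : 2 ≤ D) (hδ : 0 < δ) (hp1 : ∀ b, δ ≤ 1 - p b)
    (hpm : ∀ b, |p b| ≤ 1)
    (hsub : ∀ i j k : Fin D, j ≠ k → δ ≤ 1 + p i - p j - p k)
    (htau : tau p lam tstar = 1)
    (sol : IsCMCTCSolution p pphi lam η κ φ ψ ν (Set.Ioc 0 tstar))
    (ht : t ∈ Set.Ioc (0:ℝ) tstar) (i j : Fin D) :
    |(-(tau p lam t ^ 2) * η t i j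
      - t ^ (2 - 2 * p j) * (lam i : ℝ) * (lam j : ℝ) * (∑ a, η t a a)
      + (∑ a, t ^ (2 - 2 * p a) * (lam i : ℝ) * (lam a : ℝ) * η t a j)
      + t ^ (2 - 2 * p j) * (lam j : ℝ) * (∑ b, (lam b : ℝ) * η t i b)
      + t ^ (2 - 2 * p j) * (lam i : ℝ) * (lam j : ℝ) * ν t
      + p i * (if i = j then 1 else 0) * ν t)|
    ≤ C1c D p δ * (t / tstar) ^ (δ + qex p δ j i) * tstar ^ (p i - p j)
      * Real.sqrt (ElowSys p tstar η κ φ ψ t) := by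
  obtain ⟨ht0, hts⟩ := ht
  have htstar : 0 < tstar := lt_of_lt_of_le ht0 hts
  set S := Real.sqrt (ElowSys p tstar η κ φ ψ t) with hSdef
  have hS0 : 0 ≤ S := Real.sqrt_nonneg _
  have hx0 : 0 < t / tstar := div_pos ht0 htstar
  have hx1 : t / tstar ≤ 1 := (div_le_one htstar).2 hts
  have hKp : 0 < Kpc p δ := Kpc_pos p δ hδ
  have hCν : 0 < Cnuc D p δ := Cnuc_pos p δ hδ hD
  have hwab := weights_abs_le_one (lam := lam) htstar htau
  have hηb := fun c d => eta_bound (p := p) (η := η) (κ := κ) (φ := φ) (ψ := ψ) hδ ht0 hts c d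
  have hν : |ν t| ≤ Cnuc D p δ * (t / tstar) ^ (3 * δ / 2) * S :=
    nu_bound hD hδ hp1 hsub htau sol ⟨ht0, hts⟩
  set M : ℝ := (t / tstar) ^ (δ + qex p δ j i) * tstar ^ (p i - p j) * S with hMdef
  have hM0 : 0 ≤ M := by positivity
  -- the identity
  set E : Finset (Fin D) := (Finset.univ.erase i).erase j with hEdef
  have hid : (-(tau p lam t ^ 2) * η t i j
      - t ^ (2 - 2 * p j) * (lam i : ℝ) * (lam j : ℝ) * (∑ a, η t a a)
      + (∑ a, t ^ (2 - 2 * p a) * (lam i : ℝ) * (lam a : ℝ) * η t a j)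
      + t ^ (2 - 2 * p j) * (lam j : ℝ) * (∑ b, (lam b : ℝ) * η t i b)
      + t ^ (2 - 2 * p j) * (lam i : ℝ) * (lam j : ℝ) * ν t
      + p i * (if i = j then 1 else 0) * ν t)
      = (-(∑ b ∈ E, t ^ (2 - 2 * p b) * ((lam b : ℝ))^2 * η t i j))
      + (if i = j then t ^ (2 - 2 * p i) * ((lam i : ℝ))^2 * η t i i else 0)
      + (-(t ^ (2 - 2 * p j) * (lam i : ℝ) * (lam j : ℝ) * (∑ a, η t a a)))
      + (∑ a ∈ Finset.univ.erase i, t ^ (2 - 2 * p a) * (lam i : ℝ) * (lam a : ℝ) * η t a j)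
      + (∑ b ∈ Finset.univ.erase j, t ^ (2 - 2 * p j) * (lam j : ℝ) * (lam b : ℝ) * η t i b)
      + t ^ (2 - 2 * p j) * (lam i : ℝ) * (lam j : ℝ) * ν t
      + p i * (if i = j then 1 else 0) * ν t := by
    rw [tau_sq_eq ht0.le]
    have d3 : (∑ a, t ^ (2 - 2 * p a) * (lam i : ℝ) * (lam a : ℝ) * η t a j)
        = t ^ (2 - 2 * p i) * (lam i : ℝ) * (lam i : ℝ) * η t i j
          + ∑ a ∈ Finset.univ.erase i, t ^ (2 - 2 * p a) * (lam i : ℝ) * (lam a : ℝ) * η t a j :=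
      (Finset.add_sum_erase _ _ (Finset.mem_univ i)).symm
    have d4 : (∑ b, (lam b : ℝ) * η t i b)
        = (lam j : ℝ) * η t i j + ∑ b ∈ Finset.univ.erase j, (lam b : ℝ) * η t i b :=
      (Finset.add_sum_erase _ _ (Finset.mem_univ j)).symm
    have d4' : (∑ b ∈ Finset.univ.erase j, t ^ (2 - 2 * p j) * (lam j : ℝ) * (lam b : ℝ) * η t i b)
        = t ^ (2 - 2 * p j) * (lam j : ℝ) * (∑ b ∈ Finset.univ.erase j, (lam b : ℝ) * η t i b) := by
      rw [Finset.mul_sum]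
      apply Finset.sum_congr rfl
      intro b _
      ring
    by_cases hij : i = j
    · subst hij
      simp only [if_pos]
      have d1 : (∑ b, t ^ (2 - 2 * p b) * ((lam b : ℝ))^2)
          = t ^ (2 - 2 * p i) * ((lam i : ℝ))^2
            + ∑ b ∈ Finset.univ.erase i, t ^ (2 - 2 * p b) * ((lam b : ℝ))^2 :=
        (Finset.add_sum_erase _ _ (Finset.mem_univ i)).symm
      have hEi : E = Finset.univ.erase i := by
        rw [hEdef, Finset.erase_idem]
      have d1' : (∑ b ∈ E, t ^ (2 - 2 * p b) * ((lam b : ℝ))^2 * η t i i)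
          = (∑ b ∈ Finset.univ.erase i, t ^ (2 - 2 * p b) * ((lam b : ℝ))^2) * η t i i := by
        rw [hEi, Finset.sum_mul]
      rw [d1, d3, d4, d4', d1']
      ring
    · simp only [if_neg hij]
      have hjmem : j ∈ Finset.univ.erase i := by
        simp [Ne.symm hij]
      have d1 : (∑ b, t ^ (2 - 2 * p b) * ((lam b : ℝ))^2)
          = t ^ (2 - 2 * p i) * ((lam i : ℝ))^2
            + ∑ b ∈ Finset.univ.erase i, t ^ (2 - 2 * p b) * ((lam b : ℝ))^2 :=
        (Finset.add_sum_erase _ _ (Finset.mem_univ i)).symm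
      have d1b : (∑ b ∈ Finset.univ.erase i, t ^ (2 - 2 * p b) * ((lam b : ℝ))^2)
          = t ^ (2 - 2 * p j) * ((lam j : ℝ))^2
            + ∑ b ∈ E, t ^ (2 - 2 * p b) * ((lam b : ℝ))^2 := by
        rw [hEdef]
        exact (Finset.add_sum_erase _ _ hjmem).symm
      have d1' : (∑ b ∈ E, t ^ (2 - 2 * p b) * ((lam b : ℝ))^2 * η t i j)
          = (∑ b ∈ E, t ^ (2 - 2 * p b) * ((lam b : ℝ))^2) * η t i j := by
        rw [Finset.sum_mul]
      rw [d1, d1b, d3, d4, d4', d1']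
      ring
  rw [hid]
  -- piece bounds
  have hP1 : |(∑ b ∈ E, t ^ (2 - 2 * p b) * ((lam b : ℝ))^2 * η t i j)| ≤
      (D:ℝ) * (Kpc p δ * M) := by
    apply sum_abs_le_card_mul _ _ (by positivity)
    intro b hb
    have hbj : b ≠ j := Finset.ne_of_mem_erase hb
    have hbi : b ≠ i := Finset.ne_of_mem_erase (Finset.mem_of_mem_erase hb)
    have heq : t ^ (2 - 2 * p b) * ((lam b : ℝ))^2 * η t i j
        = t ^ (2 - 2 * p b) * (lam b : ℝ) * (lam b : ℝ) * η t i j := by ring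
    rw [heq]
    have hat := eta_atom p δ lam ht0 hts hKp.le hS0 hwab (η t i j) (2 - 2 * p b) b b i j (hηb i j)
    have hfin := atom_final ht0 hts hKp.le hS0
      (cnt1 p δ hδ hp1 hsub hbi hbj)
      (show (2 - 2*p b) - 2 + p b + p b + (p i - p j) = p i - p j by ring) hat
    rw [hMdef]
    calc |t ^ (2 - 2 * p b) * (lam b : ℝ) * (lam b : ℝ) * η t i j|
        ≤ Kpc p δ * (t/tstar) ^ (δ + qex p δ j i) * tstar ^ (p i - p j) * S := hfin
      _ = Kpc p δ * ((t/tstar) ^ (δ + qex p δ j i) * tstar ^ (p i - p j) * S) := by ring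
  have hP2 : |(if i = j then t ^ (2 - 2 * p i) * ((lam i : ℝ))^2 * η t i i else 0)| ≤
      Kpc p δ * M := by
    by_cases hij : i = j
    · rw [if_pos hij]
      have heq : t ^ (2 - 2 * p i) * ((lam i : ℝ))^2 * η t i i
          = t ^ (2 - 2 * p i) * (lam i : ℝ) * (lam i : ℝ) * η t i i := by ring
      rw [heq]
      have hat := eta_atom p δ lam ht0 hts hKp.le hS0 hwab (η t i i) (2 - 2 * p i) i i i i (hηb i i)
      have hcnt : δ + qex p δ j i ≤ (2 - 2 * p i) - qex p δ i i := by
        subst hij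
        exact cnt2 p δ hδ hp1 hsub i
      have hfin := atom_final ht0 hts hKp.le hS0 hcnt
        (show (2 - 2*p i) - 2 + p i + p i + (p i - p i) = p i - p j by rw [← hij]; ring) hat
      rw [hMdef]
      calc |t ^ (2 - 2 * p i) * (lam i : ℝ) * (lam i : ℝ) * η t i i|
          ≤ Kpc p δ * (t/tstar) ^ (δ + qex p δ j i) * tstar ^ (p i - p j) * S := hfin
        _ = Kpc p δ * ((t/tstar) ^ (δ + qex p δ j i) * tstar ^ (p i - p j) * S) := by ring
    · rw [if_neg hij, abs_zero]
      positivity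
  have hP3 : |(t ^ (2 - 2 * p j) * (lam i : ℝ) * (lam j : ℝ) * (∑ a, η t a a))| ≤
      (D:ℝ) * (Kpc p δ * M) := by
    have heq : t ^ (2 - 2 * p j) * (lam i : ℝ) * (lam j : ℝ) * (∑ a, η t a a)
        = ∑ a, t ^ (2 - 2 * p j) * (lam i : ℝ) * (lam j : ℝ) * η t a a := by
      rw [Finset.mul_sum]
    rw [heq]
    apply sum_abs_le_card_mul _ _ (by positivity)
    intro a _
    have hat := eta_atom p δ lam ht0 hts hKp.le hS0 hwab (η t a a) (2 - 2 * p j) i j a a (hηb a a)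
    have hcnt : δ + qex p δ j i ≤ (2 - 2 * p j) - qex p δ a a := by
      rw [qex_diag p δ hδ]
      exact cnt6 p δ hδ hp1 hsub i j
    have hfin := atom_final ht0 hts hKp.le hS0 hcnt
      (show (2 - 2*p j) - 2 + p i + p j + (p a - p a) = p i - p j by ring) hat
    rw [hMdef]
    calc |t ^ (2 - 2 * p j) * (lam i : ℝ) * (lam j : ℝ) * η t a a|
        ≤ Kpc p δ * (t/tstar) ^ (δ + qex p δ j i) * tstar ^ (p i - p j) * S := hfin
      _ = Kpc p δ * ((t/tstar) ^ (δ + qex p δ j i) * tstar ^ (p i - p j) * S) := by ring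
  have hP4 : |(∑ a ∈ Finset.univ.erase i, t ^ (2 - 2 * p a) * (lam i : ℝ) * (lam a : ℝ) * η t a j)|
      ≤ (D:ℝ) * (Kpc p δ * M) := by
    apply sum_abs_le_card_mul _ _ (by positivity)
    intro a ha
    have hai : a ≠ i := Finset.ne_of_mem_erase ha
    have heq : t ^ (2 - 2 * p a) * (lam i : ℝ) * (lam a : ℝ) * η t a j
        = t ^ (2 - 2 * p a) * (lam i : ℝ) * (lam a : ℝ) * η t a j := rfl
    have hat := eta_atom p δ lam ht0 hts hKp.le hS0 hwab (η t a j) (2 - 2 * p a) i a a j (hηb a j)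
    have hfin := atom_final ht0 hts hKp.le hS0
      (cnt3 p δ hδ hp1 hsub hai)
      (show (2 - 2*p a) - 2 + p i + p a + (p a - p j) = p i - p j by ring) hat
    rw [hMdef]
    calc |t ^ (2 - 2 * p a) * (lam i : ℝ) * (lam a : ℝ) * η t a j|
        ≤ Kpc p δ * (t/tstar) ^ (δ + qex p δ j i) * tstar ^ (p i - p j) * S := hfin
      _ = Kpc p δ * ((t/tstar) ^ (δ + qex p δ j i) * tstar ^ (p i - p j) * S) := by ring
  have hP5 : |(∑ b ∈ Finset.univ.erase j, t ^ (2 - 2 * p j) * (lam j : ℝ) * (lam b : ℝ) * η t i b)|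
      ≤ (D:ℝ) * (Kpc p δ * M) := by
    apply sum_abs_le_card_mul _ _ (by positivity)
    intro b hb
    have hbj : b ≠ j := Finset.ne_of_mem_erase hb
    have hat := eta_atom p δ lam ht0 hts hKp.le hS0 hwab (η t i b) (2 - 2 * p j) j b i b (hηb i b)
    have hfin := atom_final ht0 hts hKp.le hS0
      (cnt4 p δ hδ hp1 hsub hbj)
      (show (2 - 2*p j) - 2 + p j + p b + (p i - p b) = p i - p j by ring) hat
    rw [hMdef]
    calc |t ^ (2 - 2 * p j) * (lam j : ℝ) * (lam b : ℝ) * η t i b|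
        ≤ Kpc p δ * (t/tstar) ^ (δ + qex p δ j i) * tstar ^ (p i - p j) * S := hfin
      _ = Kpc p δ * ((t/tstar) ^ (δ + qex p δ j i) * tstar ^ (p i - p j) * S) := by ring
  have hP6 : |(t ^ (2 - 2 * p j) * (lam i : ℝ) * (lam j : ℝ) * ν t)| ≤ Cnuc D p δ * M := by
    have h1 : |t ^ (2 - 2 * p j) * (lam i : ℝ) * (lam j : ℝ) * ν t|
        = t ^ (2 - 2 * p j) * |(lam i : ℝ)| * |(lam j : ℝ)| * |ν t| := by
      rw [abs_mul, abs_mul, abs_mul, abs_of_nonneg (Real.rpow_nonneg ht0.le _)]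
    rw [h1]
    have hcb := coeff_bound p lam ht0 hts hwab (2 - 2 * p j) i j
    have hstep : t ^ (2 - 2 * p j) * |(lam i : ℝ)| * |(lam j : ℝ)| * |ν t| ≤
        ((t/tstar) ^ (2 - 2*p j) * tstar ^ ((2 - 2*p j) - 2 + p i + p j)) *
          (Cnuc D p δ * (t / tstar) ^ (3 * δ / 2) * S) := by
      apply mul_le_mul hcb hν (abs_nonneg _) (by positivity)
    have hcomb : (t/tstar) ^ (2 - 2*p j) * (t / tstar) ^ (3 * δ / 2)
        = (t/tstar) ^ ((2 - 2*p j) + 3 * δ / 2) := (Real.rpow_add hx0 _ _).symm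
    have hat : t ^ (2 - 2 * p j) * |(lam i : ℝ)| * |(lam j : ℝ)| * |ν t| ≤
        Cnuc D p δ * (t/tstar) ^ ((2 - 2*p j) + 3 * δ / 2) * tstar ^ ((2 - 2*p j) - 2 + p i + p j) * S := by
      calc t ^ (2 - 2 * p j) * |(lam i : ℝ)| * |(lam j : ℝ)| * |ν t|
          ≤ ((t/tstar) ^ (2 - 2*p j) * tstar ^ ((2 - 2*p j) - 2 + p i + p j)) *
            (Cnuc D p δ * (t / tstar) ^ (3 * δ / 2) * S) := hstep
        _ = Cnuc D p δ * ((t/tstar) ^ (2 - 2*p j) * (t / tstar) ^ (3 * δ / 2))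
            * tstar ^ ((2 - 2*p j) - 2 + p i + p j) * S := by ring
        _ = _ := by rw [hcomb]
    have hfin := atom_final ht0 hts hCν.le hS0
      (cnt5 p δ hδ hp1 hsub i j)
      (show (2 - 2*p j) - 2 + p i + p j = p i - p j by ring) hat
    rw [hMdef]
    calc t ^ (2 - 2 * p j) * |(lam i : ℝ)| * |(lam j : ℝ)| * |ν t|
        ≤ Cnuc D p δ * (t/tstar) ^ (δ + qex p δ j i) * tstar ^ (p i - p j) * S := hfin
      _ = Cnuc D p δ * ((t/tstar) ^ (δ + qex p δ j i) * tstar ^ (p i - p j) * S) := by ring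
  have hP7 : |(p i * (if i = j then (1:ℝ) else 0) * ν t)| ≤ Cnuc D p δ * M := by
    by_cases hij : i = j
    · rw [if_pos hij]
      have h1 : |p i * 1 * ν t| ≤ |ν t| := by
        rw [abs_mul, abs_mul, abs_one]
        have := hpm i
        nlinarith [abs_nonneg (ν t), abs_nonneg (p i)]
      have h2 : (t / tstar) ^ (3 * δ / 2) = (t/tstar) ^ (δ + qex p δ j i) := by
        congr 1
        subst hij
        rw [qex_diag p δ hδ]
        ring
      have h3 : tstar ^ (p i - p j) = 1 := by
        rw [hij, show p j - p j = (0:ℝ) by ring, Real.rpow_zero]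
      rw [hMdef]
      calc |p i * 1 * ν t| ≤ |ν t| := h1
        _ ≤ Cnuc D p δ * (t / tstar) ^ (3 * δ / 2) * S := hν
        _ = Cnuc D p δ * ((t/tstar) ^ (δ + qex p δ j i) * tstar ^ (p i - p j) * S) := by
            rw [← h2, h3]; ring
    · rw [if_neg hij]
      simp only [mul_zero, zero_mul, abs_zero]
      positivity
  -- assemble
  have habs := abs_le_seven
    (-(∑ b ∈ E, t ^ (2 - 2 * p b) * ((lam b : ℝ))^2 * η t i j))
    (if i = j then t ^ (2 - 2 * p i) * ((lam i : ℝ))^2 * η t i i else 0)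
    (-(t ^ (2 - 2 * p j) * (lam i : ℝ) * (lam j : ℝ) * (∑ a, η t a a)))
    (∑ a ∈ Finset.univ.erase i, t ^ (2 - 2 * p a) * (lam i : ℝ) * (lam a : ℝ) * η t a j)
    (∑ b ∈ Finset.univ.erase j, t ^ (2 - 2 * p j) * (lam j : ℝ) * (lam b : ℝ) * η t i b)
    (t ^ (2 - 2 * p j) * (lam i : ℝ) * (lam j : ℝ) * ν t)
    (p i * (if i = j then 1 else 0) * ν t)
  rw [abs_neg, abs_neg] at habs
  have hD2 : (2:ℝ) ≤ (D:ℝ) := by exact_mod_cast hD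
  calc _ ≤ _ := habs
    _ ≤ (D:ℝ) * (Kpc p δ * M) + Kpc p δ * M + (D:ℝ) * (Kpc p δ * M) + (D:ℝ) * (Kpc p δ * M)
        + (D:ℝ) * (Kpc p δ * M) + Cnuc D p δ * M + Cnuc D p δ * M := by
        linarith [hP1, hP2, hP3, hP4, hP5, hP6, hP7]
    _ = ((4 * (D:ℝ) + 1) * Kpc p δ + 2 * Cnuc D p δ) * M := by ring
    _ ≤ C1c D p δ * (t / tstar) ^ (δ + qex p δ j i) * tstar ^ (p i - p j) * S := by
        rw [C1c, hMdef]
        have : ((4 * (D:ℝ) + 1) * Kpc p δ + 2 * Cnuc D p δ)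
            ≤ ((4 * (D:ℝ) + 2) * Kpc p δ + 2 * Cnuc D p δ) := by nlinarith [hKp]
        nlinarith [hM0, this, mul_le_mul_of_nonneg_right this hM0]

end kx


noncomputable def KxF {D : ℕ} (p : Fin D → ℝ) (lam : Fin D → ℤ)
    (η : ℝ → Fin D → Fin D → ℝ) (ν : ℝ → ℝ) (t : ℝ) (i j : Fin D) : ℝ :=
  -(tau p lam t ^ 2) * η t i j
    - t ^ (2 - 2 * p j) * (lam i : ℝ) * (lam j : ℝ) * (∑ a, η t a a)
    + (∑ a, t ^ (2 - 2 * p a) * (lam i : ℝ) * (lam a : ℝ) * η t a j)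
    + t ^ (2 - 2 * p j) * (lam j : ℝ) * (∑ b, (lam b : ℝ) * η t i b)
    + t ^ (2 - 2 * p j) * (lam i : ℝ) * (lam j : ℝ) * ν t
    + p i * (if i = j then 1 else 0) * ν t

noncomputable def CUc (D : ℕ) (p : Fin D → ℝ) (δ : ℝ) : ℝ :=
  Cnuc D p δ + KGc p δ * C1c D p δ

noncomputable def Cpsic (D : ℕ) (p : Fin D → ℝ) (δ : ℝ) : ℝ :=
  (1 + 2 / δ) + Cnuc D p δ

noncomputable def Cphic (D : ℕ) (p : Fin D → ℝ) (δ : ℝ) : ℝ :=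
  Cnuc D p δ + (2 / δ) * Cpsic D p δ

section derivs
variable {D : ℕ} {p : Fin D → ℝ} {pphi δ : ℝ} {lam : Fin D → ℤ} {tstar : ℝ}
  {η κ : ℝ → Fin D → Fin D → ℝ} {φ ψ ν : ℝ → ℝ} {t : ℝ}

lemma shift_exp (ht : 0 < t) {a b X Y : ℝ} (h : t ^ (-a) * X = t ^ (-b) * Y) :
    X = t ^ (a - b) * Y := by
  have h1 := congrArg (fun z => t ^ a * z) h
  simp only [← mul_assoc, ← Real.rpow_add ht] at h1
  rw [show a + -a = (0:ℝ) by ring, Real.rpow_zero, one_mul, show a + -b = a - b by ring] at h1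
  exact h1

lemma sym_identity (sol : IsCMCTCSolution p pphi lam η κ φ ψ ν (Set.Ioc 0 tstar))
    (ht : t ∈ Set.Ioc (0:ℝ) tstar) (i j : Fin D) :
    κ t i j + 2 * (p i - p j) * η t i j = t ^ (2 * p i - 2 * p j) * κ t j i := by
  have ht0 : 0 < t := ht.1
  have hA := sol.sym_kappa t ht i j
  have hB := sol.sym_eta t ht i j
  have e1 : η t i j = t ^ (2 * p i - 2 * p j) * η t j i := shift_exp ht0 hB
  have e2 : κ t i j + 2 * p i * η t i j
      = t ^ (2 * p i - 2 * p j) * (κ t j i + 2 * p j * η t j i) := shift_exp ht0 hA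
  linear_combination e2 - 2 * p j * e1

lemma kappa_hasDerivAt (sol : IsCMCTCSolution p pphi lam η κ φ ψ ν (Set.Ioc 0 tstar))
    (ht : t ∈ Set.Ioc (0:ℝ) tstar) (i j : Fin D) :
    HasDerivAt (fun s => κ s i j) (KxF p lam η ν t i j / t) t :=
  sol.kappa_evol t ht i j

lemma UpsT_hasDerivAt (htstar : 0 < tstar)
    (sol : IsCMCTCSolution p pphi lam η κ φ ψ ν (Set.Ioc 0 tstar))
    (ht : t ∈ Set.Ioc (0:ℝ) tstar) (i j : Fin D) :
    HasDerivAt (fun s => UpsT p tstar η κ s i j)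
      ((-(p i * (if i = j then 1 else 0) * ν t)
        + Gfun p tstar i j t * KxF p lam η ν t j i) / t) t := by
  have ht0 : 0 < t := ht.1
  have hη' := sol.eta_evol t ht i j
  have hκ' := kappa_hasDerivAt sol ht j i
  have hG' := Gfun_hasDerivAt p tstar i j htstar ht0
  have hprod := hG'.mul hκ'
  have htotal := hη'.add hprod
  have hte : t ^ (2 * p i - 2 * p j - 1) * t = t ^ (2 * p i - 2 * p j) := by
    nth_rewrite 2 [← Real.rpow_one t]
    rw [← Real.rpow_add ht0]
    congr 1
    ring
  have hsym := sym_identity sol ht i j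
  have hval : (κ t i j + 2 * (p i - p j) * η t i j - p i * (if i = j then 1 else 0) * ν t) / t
      + (-(t ^ (2 * p i - 2 * p j - 1)) * κ t j i
        + Gfun p tstar i j t * (KxF p lam η ν t j i / t))
      = (-(p i * (if i = j then 1 else 0) * ν t)
        + Gfun p tstar i j t * KxF p lam η ν t j i) / t := by
    have ht' : (t:ℝ) ≠ 0 := ne_of_gt ht0
    have key : (κ t i j + 2 * (p i - p j) * η t i j - (p i * if i = j then 1 else 0) * ν t)
        = t ^ (2 * p i - 2 * p j) * κ t j i - (p i * if i = j then 1 else 0) * ν t := by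
      linear_combination hsym
    have h9n : -t ^ (2 * p i - 2 * p j - 1) * κ t j i
        = -(t ^ (2 * p i - 2 * p j) * κ t j i) / t := by
      rw [eq_div_iff ht']
      linear_combination (-(κ t j i)) * hte
    rw [key, h9n]
    ring
  rw [← hval]
  exact htotal

lemma log_hasDerivAt (htstar : 0 < tstar) (ht0 : 0 < t) :
    HasDerivAt (fun s : ℝ => Real.log (tstar / s)) (-(1/t)) t := by
  have hev : (fun s : ℝ => Real.log tstar - Real.log s) =ᶠ[𝓝 t]
      (fun s => Real.log (tstar / s)) := by
    filter_upwards [eventually_gt_nhds ht0] with s hs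
    rw [Real.log_div (ne_of_gt htstar) (ne_of_gt hs)]
  apply HasDerivAt.congr_of_eventuallyEq _ hev.symm
  have := (Real.hasDerivAt_log (ne_of_gt ht0)).const_sub (Real.log tstar)
  simpa [one_div] using this

lemma phiT_hasDerivAt (htstar : 0 < tstar)
    (sol : IsCMCTCSolution p pphi lam η κ φ ψ ν (Set.Ioc 0 tstar))
    (ht : t ∈ Set.Ioc (0:ℝ) tstar) :
    HasDerivAt (fun s => phiT φ ψ tstar s)
      ((pphi * ν t + Real.log (tstar / t) * (-(tau p lam t ^ 2) * φ t - pphi * ν t)) / t) t := by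
  have ht0 : 0 < t := ht.1
  have hφ' := sol.phi_evol t ht
  have hψ' := sol.psi_evol t ht
  have hlog := log_hasDerivAt (tstar := tstar) htstar ht0
  have hprod := hlog.mul hψ'
  have htotal := hφ'.add hprod
  have hval : (ψ t + pphi * ν t) / t + (-(1/t) * ψ t
      + Real.log (tstar / t) * ((-(tau p lam t ^ 2) * φ t - pphi * ν t) / t))
      = (pphi * ν t + Real.log (tstar / t) * (-(tau p lam t ^ 2) * φ t - pphi * ν t)) / t := by
    field_simp
    ring
  rw [← hval]
  exact htotal

-- bounds on log
lemma log_bound (hδ : 0 < δ) (ht0 : 0 < t) (hts : t ≤ tstar) :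
    0 ≤ Real.log (tstar / t) ∧
    Real.log (tstar / t) ≤ (2 / δ) * (t / tstar) ^ (-(δ / 2)) := by
  have htstar : 0 < tstar := lt_of_lt_of_le ht0 hts
  have hx0 : 0 < t / tstar := div_pos ht0 htstar
  constructor
  · exact Real.log_nonneg ((one_le_div ht0).2 hts)
  · have h2 : Real.log (tstar / t) ≤ (tstar / t) ^ (δ / 2) / (δ / 2) :=
      Real.log_le_rpow_div (le_of_lt (div_pos htstar ht0)) (by linarith)
    have h3 : (tstar / t) ^ (δ / 2) = (t / tstar) ^ (-(δ/2)) := by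
      rw [Real.rpow_neg (le_of_lt hx0), ← Real.inv_rpow (le_of_lt hx0)]
      congr 1
      field_simp
    rw [h3] at h2
    calc Real.log (tstar / t) ≤ (t / tstar) ^ (-(δ/2)) / (δ / 2) := h2
      _ = (2 / δ) * (t / tstar) ^ (-(δ/2)) := by
          field_simp

lemma Px_bound (hD : 2 ≤ D) (hδ : 0 < δ) (hp1 : ∀ b, δ ≤ 1 - p b)
    (hpphi : |pphi| ≤ 1)
    (hsub : ∀ i j k : Fin D, j ≠ k → δ ≤ 1 + p i - p j - p k)
    (htau : tau p lam tstar = 1)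
    (sol : IsCMCTCSolution p pphi lam η κ φ ψ ν (Set.Ioc 0 tstar))
    (ht : t ∈ Set.Ioc (0:ℝ) tstar) :
    |(-(tau p lam t ^ 2) * φ t - pphi * ν t)| ≤
      Cpsic D p δ * (t / tstar) ^ (3 * δ / 2) * Real.sqrt (ElowSys p tstar η κ φ ψ t) := by
  obtain ⟨ht0, hts⟩ := ht
  have htstar : 0 < tstar := lt_of_lt_of_le ht0 hts
  set S := Real.sqrt (ElowSys p tstar η κ φ ψ t) with hSdef
  have hS0 : 0 ≤ S := Real.sqrt_nonneg _
  have hx0 : 0 < t / tstar := div_pos ht0 htstar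
  have hx1 : t / tstar ≤ 1 := (div_le_one htstar).2 hts
  obtain ⟨hL0, hL1⟩ := log_bound (δ := δ) hδ ht0 hts
  have hτx : tau p lam t ^ 2 ≤ (t / tstar) ^ (2*δ) := tau_sq_le hδ hp1 ht0 hts htau
  have hτ0 : (0:ℝ) ≤ tau p lam t ^ 2 := sq_nonneg _
  have hψb : |ψ t| ≤ S := psi_comp_bound p tstar η κ φ ψ t htstar
  have hφTb : |phiT φ ψ tstar t| ≤ S := phiT_comp_bound p tstar η κ φ ψ t htstar
  have hν : |ν t| ≤ Cnuc D p δ * (t / tstar) ^ (3 * δ / 2) * S :=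
    nu_bound hD hδ hp1 hsub htau sol ⟨ht0, hts⟩
  have hxq : (1:ℝ) ≤ (t / tstar) ^ (-(δ/2)) := by
    calc (1:ℝ) = (t / tstar) ^ (0:ℝ) := (Real.rpow_zero _).symm
    _ ≤ _ := Real.rpow_le_rpow_of_exponent_ge hx0 hx1 (by linarith)
  have hφb : |φ t| ≤ (1 + 2/δ) * (t / tstar) ^ (-(δ/2)) * S := by
    have hφeq : φ t = phiT φ ψ tstar t - Real.log (tstar / t) * ψ t := by
      rw [phiT]; ring
    calc |φ t| ≤ |phiT φ ψ tstar t| + Real.log (tstar / t) * |ψ t| := by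
          rw [hφeq]
          calc _ ≤ |phiT φ ψ tstar t| + |Real.log (tstar / t) * ψ t| := abs_sub _ _
            _ = _ := by rw [abs_mul, abs_of_nonneg hL0]
      _ ≤ S + ((2 / δ) * (t / tstar) ^ (-(δ/2))) * S := by
          apply add_le_add hφTb
          apply mul_le_mul hL1 hψb (abs_nonneg _) (by positivity)
      _ ≤ (t / tstar) ^ (-(δ/2)) * S + ((2 / δ) * (t / tstar) ^ (-(δ/2))) * S := by
          nlinarith
      _ = (1 + 2/δ) * (t / tstar) ^ (-(δ/2)) * S := by ring
  have hcomb : (t/tstar) ^ (2*δ) * (t / tstar) ^ (-(δ/2)) = (t/tstar) ^ (3*δ/2) := by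
    rw [← Real.rpow_add hx0]; congr 1; ring
  have h1 : tau p lam t ^ 2 * |φ t| ≤ (1 + 2/δ) * (t / tstar) ^ (3*δ/2) * S := by
    calc tau p lam t ^ 2 * |φ t|
        ≤ (t/tstar) ^ (2*δ) * ((1 + 2/δ) * (t / tstar) ^ (-(δ/2)) * S) := by
          apply mul_le_mul hτx hφb (abs_nonneg _) (by positivity)
      _ = (1 + 2/δ) * ((t/tstar) ^ (2*δ) * (t / tstar) ^ (-(δ/2))) * S := by ring
      _ = (1 + 2/δ) * (t / tstar) ^ (3*δ/2) * S := by rw [hcomb]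
  have h2 : |pphi * ν t| ≤ Cnuc D p δ * (t / tstar) ^ (3 * δ / 2) * S := by
    rw [abs_mul]
    calc |pphi| * |ν t| ≤ 1 * |ν t| :=
          mul_le_mul_of_nonneg_right hpphi (abs_nonneg _)
      _ = |ν t| := one_mul _
      _ ≤ _ := hν
  calc |(-(tau p lam t ^ 2) * φ t - pphi * ν t)|
      ≤ |(-(tau p lam t ^ 2) * φ t)| + |pphi * ν t| := abs_sub _ _
    _ = tau p lam t ^ 2 * |φ t| + |pphi * ν t| := by
        rw [abs_mul, abs_neg, abs_of_nonneg hτ0]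
    _ ≤ (1 + 2/δ) * (t / tstar) ^ (3*δ/2) * S + Cnuc D p δ * (t / tstar) ^ (3 * δ / 2) * S :=
        add_le_add h1 h2
    _ = Cpsic D p δ * (t / tstar) ^ (3*δ/2) * S := by rw [Cpsic]; ring

lemma Fx_bound (hD : 2 ≤ D) (hδ : 0 < δ) (hp1 : ∀ b, δ ≤ 1 - p b)
    (hpphi : |pphi| ≤ 1)
    (hsub : ∀ i j k : Fin D, j ≠ k → δ ≤ 1 + p i - p j - p k)
    (htau : tau p lam tstar = 1)
    (sol : IsCMCTCSolution p pphi lam η κ φ ψ ν (Set.Ioc 0 tstar))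
    (ht : t ∈ Set.Ioc (0:ℝ) tstar) :
    |pphi * ν t + Real.log (tstar / t) * (-(tau p lam t ^ 2) * φ t - pphi * ν t)| ≤
      Cphic D p δ * (t / tstar) ^ δ * Real.sqrt (ElowSys p tstar η κ φ ψ t) := by
  obtain ⟨ht0, hts⟩ := ht
  have htstar : 0 < tstar := lt_of_lt_of_le ht0 hts
  set S := Real.sqrt (ElowSys p tstar η κ φ ψ t) with hSdef
  have hS0 : 0 ≤ S := Real.sqrt_nonneg _
  have hx0 : 0 < t / tstar := div_pos ht0 htstar
  have hx1 : t / tstar ≤ 1 := (div_le_one htstar).2 hts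
  obtain ⟨hL0, hL1⟩ := log_bound (δ := δ) hδ ht0 hts
  have hν : |ν t| ≤ Cnuc D p δ * (t / tstar) ^ (3 * δ / 2) * S :=
    nu_bound hD hδ hp1 hsub htau sol ⟨ht0, hts⟩
  have hPx := Px_bound hD hδ hp1 hpphi hsub htau sol ⟨ht0, hts⟩
  have hCψ0 : 0 ≤ Cpsic D p δ := by
    have := (Cnuc_pos p δ hδ hD).le
    rw [Cpsic]
    positivity
  have hcomb : (t/tstar) ^ (-(δ/2)) * (t / tstar) ^ (3*δ/2) = (t/tstar) ^ δ := by
    rw [← Real.rpow_add hx0]; congr 1; ring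
  have hxd : (t / tstar) ^ (3*δ/2) ≤ (t / tstar) ^ δ :=
    Real.rpow_le_rpow_of_exponent_ge hx0 hx1 (by linarith)
  have h1 : |pphi * ν t| ≤ Cnuc D p δ * (t / tstar) ^ δ * S := by
    rw [abs_mul]
    calc |pphi| * |ν t| ≤ 1 * |ν t| := mul_le_mul_of_nonneg_right hpphi (abs_nonneg _)
      _ = |ν t| := one_mul _
      _ ≤ Cnuc D p δ * (t / tstar) ^ (3 * δ / 2) * S := hν
      _ ≤ Cnuc D p δ * (t / tstar) ^ δ * S := by
          have := (Cnuc_pos p δ hδ hD).le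
          apply mul_le_mul_of_nonneg_right _ hS0
          apply mul_le_mul_of_nonneg_left hxd this
  have h2 : |Real.log (tstar / t) * (-(tau p lam t ^ 2) * φ t - pphi * ν t)| ≤
      (2/δ) * Cpsic D p δ * (t / tstar) ^ δ * S := by
    rw [abs_mul, abs_of_nonneg hL0]
    calc Real.log (tstar / t) * |(-(tau p lam t ^ 2) * φ t - pphi * ν t)|
        ≤ ((2 / δ) * (t / tstar) ^ (-(δ/2))) * (Cpsic D p δ * (t / tstar) ^ (3*δ/2) * S) := by
          apply mul_le_mul hL1 hPx (abs_nonneg _) (by positivity)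
      _ = (2/δ) * Cpsic D p δ * ((t/tstar) ^ (-(δ/2)) * (t / tstar) ^ (3*δ/2)) * S := by ring
      _ = (2/δ) * Cpsic D p δ * (t / tstar) ^ δ * S := by rw [hcomb]
  calc |pphi * ν t + Real.log (tstar / t) * (-(tau p lam t ^ 2) * φ t - pphi * ν t)|
      ≤ |pphi * ν t| + |Real.log (tstar / t) * (-(tau p lam t ^ 2) * φ t - pphi * ν t)| :=
        abs_add_le _ _
    _ ≤ Cnuc D p δ * (t / tstar) ^ δ * S + (2/δ) * Cpsic D p δ * (t / tstar) ^ δ * S :=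
        add_le_add h1 h2
    _ = Cphic D p δ * (t / tstar) ^ δ * S := by rw [Cphic]; ring

lemma UX_bound (hD : 2 ≤ D) (hδ : 0 < δ) (hp1 : ∀ b, δ ≤ 1 - p b)
    (hpm : ∀ b, |p b| ≤ 1)
    (hsub : ∀ i j k : Fin D, j ≠ k → δ ≤ 1 + p i - p j - p k)
    (htau : tau p lam tstar = 1)
    (sol : IsCMCTCSolution p pphi lam η κ φ ψ ν (Set.Ioc 0 tstar))
    (ht : t ∈ Set.Ioc (0:ℝ) tstar) (i j : Fin D) :
    |(-(p i * (if i = j then 1 else 0) * ν t)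
        + Gfun p tstar i j t * KxF p lam η ν t j i)| ≤
      CUc D p δ * (t / tstar) ^ δ * tstar ^ (p i - p j)
        * Real.sqrt (ElowSys p tstar η κ φ ψ t) := by
  obtain ⟨ht0, hts⟩ := ht
  have htstar : 0 < tstar := lt_of_lt_of_le ht0 hts
  set S := Real.sqrt (ElowSys p tstar η κ φ ψ t) with hSdef
  have hS0 : 0 ≤ S := Real.sqrt_nonneg _
  have hx0 : 0 < t / tstar := div_pos ht0 htstar
  have hx1 : t / tstar ≤ 1 := (div_le_one htstar).2 hts
  have hKG0 : 0 ≤ KGc p δ := (KGc_pos p δ hδ).le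
  have hC10 : 0 ≤ C1c D p δ := by
    have h1 := (Kpc_pos p δ hδ).le
    have h2 := (Cnuc_pos p δ hδ hD).le
    rw [C1c]; positivity
  have hν : |ν t| ≤ Cnuc D p δ * (t / tstar) ^ (3 * δ / 2) * S :=
    nu_bound hD hδ hp1 hsub htau sol ⟨ht0, hts⟩
  have hxd : (t / tstar) ^ (3*δ/2) ≤ (t / tstar) ^ δ :=
    Real.rpow_le_rpow_of_exponent_ge hx0 hx1 (by linarith)
  -- first piece
  have h1 : |p i * (if i = j then (1:ℝ) else 0) * ν t| ≤
      Cnuc D p δ * (t / tstar) ^ δ * tstar ^ (p i - p j) * S := by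
    by_cases hij : i = j
    · rw [if_pos hij]
      have h3 : tstar ^ (p i - p j) = 1 := by
        rw [hij, show p j - p j = (0:ℝ) by ring, Real.rpow_zero]
      have ha : |p i * 1 * ν t| ≤ |ν t| := by
        rw [abs_mul, abs_mul, abs_one]
        nlinarith [abs_nonneg (ν t), abs_nonneg (p i), hpm i]
      calc |p i * 1 * ν t| ≤ |ν t| := ha
        _ ≤ Cnuc D p δ * (t / tstar) ^ (3 * δ / 2) * S := hν
        _ ≤ Cnuc D p δ * (t / tstar) ^ δ * S := by
            have := (Cnuc_pos p δ hδ hD).le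
            apply mul_le_mul_of_nonneg_right _ hS0
            exact mul_le_mul_of_nonneg_left hxd this
        _ = Cnuc D p δ * (t / tstar) ^ δ * tstar ^ (p i - p j) * S := by
            rw [h3]; ring
    · rw [if_neg hij]
      simp only [mul_zero, zero_mul, abs_zero]
      have hCν0 := (Cnuc_pos p δ hδ hD).le
      exact mul_nonneg (mul_nonneg (mul_nonneg hCν0 (by positivity)) (by positivity)) hS0
  -- second piece
  have hG : |Gfun p tstar i j t| ≤ KGc p δ * tstar ^ (2 * p i - 2 * p j)
      * (t / tstar) ^ (-(qex p δ i j)) := by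
    have hb := Gfun_bound p tstar i j hδ htstar ht0 hts
    have h2 := KGc_ge p δ hδ i j
    rw [qex]
    calc |Gfun p tstar i j t| ≤ _ := hb
      _ ≤ _ := by
          apply mul_le_mul_of_nonneg_right _ (by positivity)
          apply mul_le_mul_of_nonneg_right h2 (by positivity)
  have hKx : |KxF p lam η ν t j i| ≤
      C1c D p δ * (t / tstar) ^ (δ + qex p δ i j) * tstar ^ (p j - p i) * S := by
    exact Kx_bound hD hδ hp1 hpm hsub htau sol ⟨ht0, hts⟩ j i
  have h2 : |Gfun p tstar i j t * KxF p lam η ν t j i| ≤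
      KGc p δ * C1c D p δ * (t / tstar) ^ δ * tstar ^ (p i - p j) * S := by
    rw [abs_mul]
    have hcombx : (t / tstar) ^ (-(qex p δ i j)) * (t / tstar) ^ (δ + qex p δ i j)
        = (t / tstar) ^ δ := by
      rw [← Real.rpow_add hx0]; congr 1; ring
    have hcombw : tstar ^ (2 * p i - 2 * p j) * tstar ^ (p j - p i) = tstar ^ (p i - p j) := by
      rw [← Real.rpow_add htstar]; congr 1; ring
    calc |Gfun p tstar i j t| * |KxF p lam η ν t j i|
        ≤ (KGc p δ * tstar ^ (2 * p i - 2 * p j) * (t / tstar) ^ (-(qex p δ i j))) *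
          (C1c D p δ * (t / tstar) ^ (δ + qex p δ i j) * tstar ^ (p j - p i) * S) := by
          apply mul_le_mul hG hKx (abs_nonneg _)
          exact mul_nonneg (mul_nonneg hKG0 (by positivity)) (by positivity)
      _ = KGc p δ * C1c D p δ *
          ((t / tstar) ^ (-(qex p δ i j)) * (t / tstar) ^ (δ + qex p δ i j)) *
          (tstar ^ (2 * p i - 2 * p j) * tstar ^ (p j - p i)) * S := by ring
      _ = KGc p δ * C1c D p δ * (t / tstar) ^ δ * tstar ^ (p i - p j) * S := by
          rw [hcombx, hcombw]
  calc |(-(p i * (if i = j then 1 else 0) * ν t)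
        + Gfun p tstar i j t * KxF p lam η ν t j i)|
      ≤ |p i * (if i = j then (1:ℝ) else 0) * ν t|
        + |Gfun p tstar i j t * KxF p lam η ν t j i| := by
        calc _ ≤ |(-(p i * (if i = j then (1:ℝ) else 0) * ν t))|
              + |Gfun p tstar i j t * KxF p lam η ν t j i| := abs_add_le _ _
          _ = _ := by rw [abs_neg]
    _ ≤ Cnuc D p δ * (t / tstar) ^ δ * tstar ^ (p i - p j) * S
        + KGc p δ * C1c D p δ * (t / tstar) ^ δ * tstar ^ (p i - p j) * S := add_le_add h1 h2
    _ = CUc D p δ * (t / tstar) ^ δ * tstar ^ (p i - p j) * S := by rw [CUc]; ring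

end derivs


noncomputable def DEfun {D : ℕ} (p : Fin D → ℝ) (pphi : ℝ) (lam : Fin D → ℤ) (tstar : ℝ)
    (η κ : ℝ → Fin D → Fin D → ℝ) (φ ψ ν : ℝ → ℝ) (t : ℝ) : ℝ :=
  (∑ i, ∑ j, tstar ^ (-(2 * p i) + 2 * p j) *
      (2 * κ t i j * (KxF p lam η ν t i j / t)
       + 2 * UpsT p tstar η κ t i j *
          ((-(p i * (if i = j then 1 else 0) * ν t)
            + Gfun p tstar i j t * KxF p lam η ν t j i) / t)))
    + 2 * ψ t * ((-(tau p lam t ^ 2) * φ t - pphi * ν t) / t)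
    + 2 * phiT φ ψ tstar t *
        ((pphi * ν t + Real.log (tstar / t) * (-(tau p lam t ^ 2) * φ t - pphi * ν t)) / t)

noncomputable def Cc (D : ℕ) (p : Fin D → ℝ) (δ : ℝ) : ℝ :=
  2 * D ^ 2 * (C1c D p δ + CUc D p δ) + 2 * Cpsic D p δ + 2 * Cphic D p δ

section final
variable {D : ℕ} {p : Fin D → ℝ} {pphi δ : ℝ} {lam : Fin D → ℤ} {tstar : ℝ}
  {η κ : ℝ → Fin D → Fin D → ℝ} {φ ψ ν : ℝ → ℝ} {t : ℝ}

lemma Cc_pos (hD : 2 ≤ D) (hδ : 0 < δ) : 0 < Cc D p δ := by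
  have h1 := Kpc_pos p δ hδ
  have h2 := Cnuc_pos p δ hδ hD
  have h3 := KGc_pos p δ hδ
  have h4 : 0 < C1c D p δ := by rw [C1c]; positivity
  have h5 : 0 < CUc D p δ := by rw [CUc]; positivity
  have h6 : 0 < Cpsic D p δ := by rw [Cpsic]; positivity
  have h7 : 0 < Cphic D p δ := by rw [Cphic]; positivity
  have hD0 : (0:ℝ) < (D:ℝ) := by
    have : 0 < D := by omega
    exact_mod_cast this
  rw [Cc]
  positivity

lemma ElowSys_hasDerivAt (htstar : 0 < tstar)
    (sol : IsCMCTCSolution p pphi lam η κ φ ψ ν (Set.Ioc 0 tstar))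
    (ht : t ∈ Set.Ioc (0:ℝ) tstar) :
    HasDerivAt (ElowSys p tstar η κ φ ψ) (DEfun p pphi lam tstar η κ φ ψ ν t) t := by
  have hterm : ∀ i j, HasDerivAt
      (fun s => tstar ^ (-(2 * p i) + 2 * p j)
        * ((κ s i j) ^ 2 + (UpsT p tstar η κ s i j) ^ 2))
      (tstar ^ (-(2 * p i) + 2 * p j) *
        (2 * κ t i j * (KxF p lam η ν t i j / t)
         + 2 * UpsT p tstar η κ t i j *
            ((-(p i * (if i = j then 1 else 0) * ν t)
              + Gfun p tstar i j t * KxF p lam η ν t j i) / t))) t := by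
    intro i j
    have h1 := (kappa_hasDerivAt sol ht i j).pow 2
    have h2 := (UpsT_hasDerivAt htstar sol ht i j).pow 2
    have h3 := (h1.add h2).const_mul (tstar ^ (-(2 * p i) + 2 * p j))
    refine h3.congr_deriv ?_
    push_cast
    ring
  have hsum : HasDerivAt
      (fun s => ∑ i, ∑ j, tstar ^ (-(2 * p i) + 2 * p j)
        * ((κ s i j) ^ 2 + (UpsT p tstar η κ s i j) ^ 2))
      (∑ i, ∑ j, tstar ^ (-(2 * p i) + 2 * p j) *
        (2 * κ t i j * (KxF p lam η ν t i j / t)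
         + 2 * UpsT p tstar η κ t i j *
            ((-(p i * (if i = j then 1 else 0) * ν t)
              + Gfun p tstar i j t * KxF p lam η ν t j i) / t))) t :=
    HasDerivAt.fun_sum (fun i _ => HasDerivAt.fun_sum (fun j _ => hterm i j))
  have hψ2 : HasDerivAt (fun s => ψ s ^ 2)
      (2 * ψ t * ((-(tau p lam t ^ 2) * φ t - pphi * ν t) / t)) t := by
    have := (sol.psi_evol t ht).pow 2
    refine this.congr_deriv ?_
    push_cast
    ring
  have hφ2 : HasDerivAt (fun s => phiT φ ψ tstar s ^ 2)
      (2 * phiT φ ψ tstar t *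
        ((pphi * ν t + Real.log (tstar / t) * (-(tau p lam t ^ 2) * φ t - pphi * ν t)) / t)) t := by
    have := (phiT_hasDerivAt htstar sol ht).pow 2
    refine this.congr_deriv ?_
    push_cast
    ring
  exact (hsum.add hψ2).add hφ2

lemma tDE_bound (hD : 2 ≤ D) (hδ : 0 < δ) (hp1 : ∀ b, δ ≤ 1 - p b)
    (hpm : ∀ b, |p b| ≤ 1) (hpphi : |pphi| ≤ 1)
    (hsub : ∀ i j k : Fin D, j ≠ k → δ ≤ 1 + p i - p j - p k)
    (htau : tau p lam tstar = 1)
    (sol : IsCMCTCSolution p pphi lam η κ φ ψ ν (Set.Ioc 0 tstar))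
    (ht : t ∈ Set.Ioc (0:ℝ) tstar) :
    |t * DEfun p pphi lam tstar η κ φ ψ ν t| ≤
      Cc D p δ * (t / tstar) ^ δ * ElowSys p tstar η κ φ ψ t := by
  obtain ⟨ht0, hts⟩ := ht
  have htstar : 0 < tstar := lt_of_lt_of_le ht0 hts
  have ht' : (t:ℝ) ≠ 0 := ne_of_gt ht0
  set S := Real.sqrt (ElowSys p tstar η κ φ ψ t) with hSdef
  have hS0 : 0 ≤ S := Real.sqrt_nonneg _
  have hSsq : S ^ 2 = ElowSys p tstar η κ φ ψ t := elow_sq_sqrt p tstar η κ φ ψ t htstar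
  have hx0 : 0 < t / tstar := div_pos ht0 htstar
  have hx1 : t / tstar ≤ 1 := (div_le_one htstar).2 hts
  have hKp : 0 < Kpc p δ := Kpc_pos p δ hδ
  have hCν : 0 < Cnuc D p δ := Cnuc_pos p δ hδ hD
  have hC1 : 0 < C1c D p δ := by rw [C1c]; positivity
  have hCU : 0 < CUc D p δ := by
    have := KGc_pos p δ hδ
    rw [CUc]; positivity
  have hCψ : 0 < Cpsic D p δ := by rw [Cpsic]; positivity
  have hCφ : 0 < Cphic D p δ := by rw [Cphic]; positivity
  -- rewrite t * DEfun
  have heq : t * DEfun p pphi lam tstar η κ φ ψ ν t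
      = (∑ i, ∑ j, tstar ^ (-(2 * p i) + 2 * p j) *
          (2 * κ t i j * KxF p lam η ν t i j
           + 2 * UpsT p tstar η κ t i j *
              (-(p i * (if i = j then 1 else 0) * ν t)
                + Gfun p tstar i j t * KxF p lam η ν t j i)))
        + 2 * ψ t * (-(tau p lam t ^ 2) * φ t - pphi * ν t)
        + 2 * phiT φ ψ tstar t *
            (pphi * ν t + Real.log (tstar / t) * (-(tau p lam t ^ 2) * φ t - pphi * ν t)) := by
    rw [DEfun]
    simp only [← mul_div_assoc, ← add_div, ← Finset.sum_div]
    rw [mul_div_cancel_left₀ _ ht']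
  rw [heq]
  -- per-term bounds
  have hterm : ∀ i j : Fin D, |tstar ^ (-(2 * p i) + 2 * p j) *
      (2 * κ t i j * KxF p lam η ν t i j
       + 2 * UpsT p tstar η κ t i j *
          (-(p i * (if i = j then 1 else 0) * ν t)
            + Gfun p tstar i j t * KxF p lam η ν t j i))| ≤
      (2 * C1c D p δ + 2 * CUc D p δ) * (t / tstar) ^ δ * S ^ 2 := by
    intro i j
    have hF0 : (0:ℝ) ≤ tstar ^ (-(2 * p i) + 2 * p j) := Real.rpow_nonneg htstar.le _
    have hκb : |κ t i j| ≤ tstar ^ (p i - p j) * S :=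
      kappa_comp_bound p tstar η κ φ ψ t htstar i j
    have hUb : |UpsT p tstar η κ t i j| ≤ tstar ^ (p i - p j) * S :=
      ups_comp_bound p tstar η κ φ ψ t htstar i j
    have hKxb : |KxF p lam η ν t i j| ≤
        C1c D p δ * (t / tstar) ^ (δ + qex p δ j i) * tstar ^ (p i - p j) * S :=
      Kx_bound hD hδ hp1 hpm hsub htau sol ⟨ht0, hts⟩ i j
    have hq0 : 0 < qex p δ j i := qex_pos p δ hδ j i
    have hxq : (t / tstar) ^ (δ + qex p δ j i) ≤ (t / tstar) ^ δ :=
      Real.rpow_le_rpow_of_exponent_ge hx0 hx1 (by linarith)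
    have hKxb' : |KxF p lam η ν t i j| ≤
        C1c D p δ * (t / tstar) ^ δ * tstar ^ (p i - p j) * S := by
      calc |KxF p lam η ν t i j| ≤ _ := hKxb
        _ ≤ _ := by gcongr
    have hUXb : |(-(p i * (if i = j then 1 else 0) * ν t)
        + Gfun p tstar i j t * KxF p lam η ν t j i)| ≤
        CUc D p δ * (t / tstar) ^ δ * tstar ^ (p i - p j) * S :=
      UX_bound hD hδ hp1 hpm hsub htau sol ⟨ht0, hts⟩ i j
    have hww : tstar ^ (-(2 * p i) + 2 * p j) * (tstar ^ (p i - p j) * tstar ^ (p i - p j)) = 1 := by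
      rw [← Real.rpow_add htstar, ← Real.rpow_add htstar]
      rw [show -(2 * p i) + 2 * p j + (p i - p j + (p i - p j)) = 0 by ring, Real.rpow_zero]
    rw [abs_mul, abs_of_nonneg hF0]
    have h1 : |2 * κ t i j * KxF p lam η ν t i j| ≤
        2 * C1c D p δ * (t / tstar) ^ δ * (tstar ^ (p i - p j) * tstar ^ (p i - p j)) * S^2 := by
      rw [abs_mul, abs_mul, abs_of_nonneg (by norm_num : (0:ℝ) ≤ 2)]
      calc 2 * |κ t i j| * |KxF p lam η ν t i j|
          ≤ 2 * (tstar ^ (p i - p j) * S) *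
            (C1c D p δ * (t / tstar) ^ δ * tstar ^ (p i - p j) * S) := by
            apply mul_le_mul _ hKxb' (abs_nonneg _) (by positivity)
            apply mul_le_mul_of_nonneg_left hκb (by norm_num)
        _ = 2 * C1c D p δ * (t / tstar) ^ δ * (tstar ^ (p i - p j) * tstar ^ (p i - p j)) * S^2 := by
            ring
    have h2 : |2 * UpsT p tstar η κ t i j *
        (-(p i * (if i = j then 1 else 0) * ν t)
          + Gfun p tstar i j t * KxF p lam η ν t j i)| ≤
        2 * CUc D p δ * (t / tstar) ^ δ * (tstar ^ (p i - p j) * tstar ^ (p i - p j)) * S^2 := by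
      rw [abs_mul, abs_mul, abs_of_nonneg (by norm_num : (0:ℝ) ≤ 2)]
      calc 2 * |UpsT p tstar η κ t i j| * |(-(p i * (if i = j then 1 else 0) * ν t)
            + Gfun p tstar i j t * KxF p lam η ν t j i)|
          ≤ 2 * (tstar ^ (p i - p j) * S) *
            (CUc D p δ * (t / tstar) ^ δ * tstar ^ (p i - p j) * S) := by
            apply mul_le_mul _ hUXb (abs_nonneg _) (by positivity)
            apply mul_le_mul_of_nonneg_left hUb (by norm_num)
        _ = _ := by ring
    calc tstar ^ (-(2 * p i) + 2 * p j) * |2 * κ t i j * KxF p lam η ν t i j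
          + 2 * UpsT p tstar η κ t i j *
            (-(p i * (if i = j then 1 else 0) * ν t)
              + Gfun p tstar i j t * KxF p lam η ν t j i)|
        ≤ tstar ^ (-(2 * p i) + 2 * p j) *
          ((2 * C1c D p δ + 2 * CUc D p δ) * (t / tstar) ^ δ *
            (tstar ^ (p i - p j) * tstar ^ (p i - p j)) * S^2) := by
          apply mul_le_mul_of_nonneg_left _ hF0
          calc |2 * κ t i j * KxF p lam η ν t i j
              + 2 * UpsT p tstar η κ t i j *
                (-(p i * (if i = j then 1 else 0) * ν t)
                  + Gfun p tstar i j t * KxF p lam η ν t j i)| ≤ _ + _ := abs_add_le _ _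
            _ ≤ _ := by
                have := add_le_add h1 h2
                calc _ ≤ _ := this
                  _ = (2 * C1c D p δ + 2 * CUc D p δ) * (t / tstar) ^ δ *
                      (tstar ^ (p i - p j) * tstar ^ (p i - p j)) * S^2 := by ring
      _ = (2 * C1c D p δ + 2 * CUc D p δ) * (t / tstar) ^ δ * S^2 *
          (tstar ^ (-(2 * p i) + 2 * p j) * (tstar ^ (p i - p j) * tstar ^ (p i - p j))) := by
          ring
      _ = (2 * C1c D p δ + 2 * CUc D p δ) * (t / tstar) ^ δ * S^2 := by
          rw [hww, mul_one]
  -- sum bound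
  have hsumb : |∑ i, ∑ j, tstar ^ (-(2 * p i) + 2 * p j) *
      (2 * κ t i j * KxF p lam η ν t i j
       + 2 * UpsT p tstar η κ t i j *
          (-(p i * (if i = j then 1 else 0) * ν t)
            + Gfun p tstar i j t * KxF p lam η ν t j i))| ≤
      (D:ℝ) * ((D:ℝ) * ((2 * C1c D p δ + 2 * CUc D p δ) * (t / tstar) ^ δ * S ^ 2)) := by
    apply sum_abs_le_card_mul _ _ (by positivity)
    intro i _
    apply sum_abs_le_card_mul _ _ (by positivity)
    intro j _
    exact hterm i j
  have hψb : |ψ t| ≤ S := psi_comp_bound p tstar η κ φ ψ t htstar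
  have hφTb : |phiT φ ψ tstar t| ≤ S := phiT_comp_bound p tstar η κ φ ψ t htstar
  have hPx := Px_bound hD hδ hp1 hpphi hsub htau sol ⟨ht0, hts⟩
  have hFx := Fx_bound hD hδ hp1 hpphi hsub htau sol ⟨ht0, hts⟩
  have hxd : (t / tstar) ^ (3*δ/2) ≤ (t / tstar) ^ δ :=
    Real.rpow_le_rpow_of_exponent_ge hx0 hx1 (by linarith)
  have h3 : |2 * ψ t * (-(tau p lam t ^ 2) * φ t - pphi * ν t)| ≤
      2 * Cpsic D p δ * (t / tstar) ^ δ * S ^ 2 := by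
    rw [abs_mul, abs_mul, abs_of_nonneg (by norm_num : (0:ℝ) ≤ 2)]
    calc 2 * |ψ t| * |(-(tau p lam t ^ 2) * φ t - pphi * ν t)|
        ≤ 2 * S * (Cpsic D p δ * (t / tstar) ^ (3*δ/2) * S) := by
          apply mul_le_mul _ hPx (abs_nonneg _) (by positivity)
          apply mul_le_mul_of_nonneg_left hψb (by norm_num)
      _ ≤ 2 * S * (Cpsic D p δ * (t / tstar) ^ δ * S) := by
          have : Cpsic D p δ * (t / tstar) ^ (3*δ/2) * S ≤ Cpsic D p δ * (t / tstar) ^ δ * S := by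
            gcongr
          nlinarith [hS0]
      _ = 2 * Cpsic D p δ * (t / tstar) ^ δ * S ^ 2 := by ring
  have h4 : |2 * phiT φ ψ tstar t *
      (pphi * ν t + Real.log (tstar / t) * (-(tau p lam t ^ 2) * φ t - pphi * ν t))| ≤
      2 * Cphic D p δ * (t / tstar) ^ δ * S ^ 2 := by
    rw [abs_mul, abs_mul, abs_of_nonneg (by norm_num : (0:ℝ) ≤ 2)]
    calc 2 * |phiT φ ψ tstar t| * |pphi * ν t
          + Real.log (tstar / t) * (-(tau p lam t ^ 2) * φ t - pphi * ν t)|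
        ≤ 2 * S * (Cphic D p δ * (t / tstar) ^ δ * S) := by
          apply mul_le_mul _ hFx (abs_nonneg _) (by positivity)
          apply mul_le_mul_of_nonneg_left hφTb (by norm_num)
      _ = 2 * Cphic D p δ * (t / tstar) ^ δ * S ^ 2 := by ring
  have habs3 : ∀ a b c : ℝ, |a + b + c| ≤ |a| + |b| + |c| := by
    intro a b c
    calc |a + b + c| ≤ |a + b| + |c| := abs_add_le _ _
      _ ≤ |a| + |b| + |c| := by linarith [abs_add_le a b]
  calc |_ + _ + _| ≤ _ := habs3 _ _ _
    _ ≤ (D:ℝ) * ((D:ℝ) * ((2 * C1c D p δ + 2 * CUc D p δ) * (t / tstar) ^ δ * S ^ 2))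
        + 2 * Cpsic D p δ * (t / tstar) ^ δ * S ^ 2
        + 2 * Cphic D p δ * (t / tstar) ^ δ * S ^ 2 := by
        linarith [hsumb, h3, h4]
    _ = Cc D p δ * (t / tstar) ^ δ * S ^ 2 := by rw [Cc]; ring
    _ = Cc D p δ * (t / tstar) ^ δ * ElowSys p tstar η κ φ ψ t := by rw [hSsq]

end final


-- MAIN THEOREM
/-- Proposition `prop:einstein_low_freq`: the low-frequency energy estimate for the
linearized Einstein–scalar field system in CMCTC gauge, under δ-subcriticality. -/
theorem einstein_low_freq_energy_estimate (D : ℕ) (hD : 2 ≤ D)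
    (p : Fin D → ℝ) (pphi : ℝ)
    (hkas1 : ∑ i, p i = 1) (hkas2 : (∑ i, p i ^ 2) + 2 * pphi ^ 2 = 1)
    (hp : ∀ i, p i < 1)
    (δ : ℝ) (hδ : 0 < δ)
    (hsub : ∀ i j k : Fin D, j ≠ k → δ ≤ 1 + p i - p j - p k) :
    (∃ C : ℝ, 0 < C ∧
      ∀ (lam : Fin D → ℤ), lam ≠ 0 →
      ∀ tstar : ℝ, 0 < tstar → tstar ≤ 1 → tau p lam tstar = 1 →
      ∀ (η κ : ℝ → Fin D → Fin D → ℝ) (φ ψ ν : ℝ → ℝ),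
        IsCMCTCSolution p pphi lam η κ φ ψ ν (Set.Ioc 0 tstar) →
      ∀ t ∈ Set.Ioc (0:ℝ) tstar,
        ∃ E' : ℝ, HasDerivAt (ElowSys p tstar η κ φ ψ) E' t ∧
          |t * E'| ≤ C * (t / tstar) ^ δ * ElowSys p tstar η κ φ ψ t) ∧
    (∃ Clow : ℝ, 0 < Clow ∧
      ∀ (lam : Fin D → ℤ), lam ≠ 0 →
      ∀ tstar : ℝ, 0 < tstar → tstar ≤ 1 → tau p lam tstar = 1 →
      ∀ (η κ : ℝ → Fin D → Fin D → ℝ) (φ ψ ν : ℝ → ℝ),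
        IsCMCTCSolution p pphi lam η κ φ ψ ν (Set.Ioc 0 tstar) →
      ∀ t ∈ Set.Ioc (0:ℝ) tstar,
        Clow⁻¹ * ElowSys p tstar η κ φ ψ t ≤ ElowSys p tstar η κ φ ψ tstar ∧
        ElowSys p tstar η κ φ ψ tstar ≤ Clow * ElowSys p tstar η κ φ ψ t) := by
  have hp1 : ∀ b, δ ≤ 1 - p b := hp1_of_hsub hD p δ hsub
  have hpm : ∀ b, |p b| ≤ 1 := by
    intro b
    have h1 : p b ^ 2 ≤ ∑ i, p i ^ 2 :=
      Finset.single_le_sum (f := fun i => p i ^ 2) (fun i _ => sq_nonneg _) (Finset.mem_univ b)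
    have h2 : p b ^ 2 ≤ 1 := by nlinarith [sq_nonneg pphi]
    nlinarith [abs_nonneg (p b), sq_abs (p b)]
  have hpphi : |pphi| ≤ 1 := by
    have h1 : (0:ℝ) ≤ ∑ i, p i ^ 2 := Finset.sum_nonneg (fun i _ => sq_nonneg _)
    nlinarith [abs_nonneg pphi, sq_abs pphi]
  have hCc := Cc_pos (p := p) hD hδ
  -- the master pointwise fact
  have master : ∀ (lam : Fin D → ℤ), lam ≠ 0 →
      ∀ tstar : ℝ, 0 < tstar → tstar ≤ 1 → tau p lam tstar = 1 →
      ∀ (η κ : ℝ → Fin D → Fin D → ℝ) (φ ψ ν : ℝ → ℝ),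
        IsCMCTCSolution p pphi lam η κ φ ψ ν (Set.Ioc 0 tstar) →
      ∀ t ∈ Set.Ioc (0:ℝ) tstar,
        HasDerivAt (ElowSys p tstar η κ φ ψ) (DEfun p pphi lam tstar η κ φ ψ ν t) t ∧
        |t * DEfun p pphi lam tstar η κ φ ψ ν t| ≤
          Cc D p δ * (t / tstar) ^ δ * ElowSys p tstar η κ φ ψ t := by
    intro lam hlam tstar htstar0 htstar1 htau η κ φ ψ ν sol t ht
    exact ⟨ElowSys_hasDerivAt htstar0 sol ht,
      tDE_bound hD hδ hp1 hpm hpphi hsub htau sol ht⟩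
  constructor
  · exact ⟨Cc D p δ, hCc, fun lam hlam tstar h0 h1 htau η κ φ ψ ν sol t ht =>
      ⟨DEfun p pphi lam tstar η κ φ ψ ν t,
        (master lam hlam tstar h0 h1 htau η κ φ ψ ν sol t ht).1,
        (master lam hlam tstar h0 h1 htau η κ φ ψ ν sol t ht).2⟩⟩
  · refine ⟨Real.exp (Cc D p δ / δ), Real.exp_pos _, ?_⟩
    intro lam hlam tstar htstar0 htstar1 htau η κ φ ψ ν sol t ht
    obtain ⟨ht0, hts⟩ := ht
    set E : ℝ → ℝ := ElowSys p tstar η κ φ ψ with hEdef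
    set DE : ℝ → ℝ := DEfun p pphi lam tstar η κ φ ψ ν with hDEdef
    have hmem : ∀ s ∈ Set.Icc t tstar, s ∈ Set.Ioc (0:ℝ) tstar := by
      intro s hs
      exact ⟨lt_of_lt_of_le ht0 hs.1, hs.2⟩
    have hE0 : ∀ s, 0 ≤ E s := fun s => elow_nonneg p tstar η κ φ ψ s htstar0
    have hEd : ∀ s ∈ Set.Icc t tstar, HasDerivAt E (DE s) s := fun s hs =>
      (master lam hlam tstar htstar0 htstar1 htau η κ φ ψ ν sol s (hmem s hs)).1
    have hbd : ∀ s ∈ Set.Icc t tstar,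
        |s * DE s| ≤ Cc D p δ * (s / tstar) ^ δ * E s := fun s hs =>
      (master lam hlam tstar htstar0 htstar1 htau η κ φ ψ ν sol s (hmem s hs)).2
    -- auxiliary exponent function
    set h : ℝ → ℝ := fun u => Cc D p δ / δ * (u / tstar) ^ δ with hhdef
    have hgd : ∀ s : ℝ, 0 < s → HasDerivAt h (Cc D p δ / s * (s / tstar) ^ δ) s := by
      intro s hs
      have hx0 : (0:ℝ) < s / tstar := div_pos hs htstar0
      have h1 : HasDerivAt (fun u : ℝ => u / tstar) (1 / tstar) s := by
        simpa using (hasDerivAt_id s).div_const tstar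
      have h2 := h1.rpow_const (p := δ) (Or.inl (ne_of_gt hx0))
      have h3 := h2.const_mul (Cc D p δ / δ)
      refine h3.congr_deriv ?_
      rw [Real.rpow_sub_one (ne_of_gt hx0)]
      field_simp
    have hDEbd : ∀ s ∈ Set.Icc t tstar,
        -(Cc D p δ / s * (s / tstar) ^ δ * E s) ≤ DE s ∧
        DE s ≤ Cc D p δ / s * (s / tstar) ^ δ * E s := by
      intro s hs
      have hs0 : 0 < s := lt_of_lt_of_le ht0 hs.1
      have := abs_le.1 (hbd s hs)
      constructor
      · have h1 : -(Cc D p δ * (s / tstar) ^ δ * E s) ≤ s * DE s := this.1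
        have h2 : -(Cc D p δ * (s / tstar) ^ δ * E s) / s ≤ DE s := by
          rw [div_le_iff₀ hs0]
          nlinarith
        calc -(Cc D p δ / s * (s / tstar) ^ δ * E s)
            = -(Cc D p δ * (s / tstar) ^ δ * E s) / s := by ring
          _ ≤ DE s := h2
      · have h1 : s * DE s ≤ Cc D p δ * (s / tstar) ^ δ * E s := this.2
        have h2 : DE s ≤ Cc D p δ * (s / tstar) ^ δ * E s / s := by
          rw [le_div_iff₀ hs0]
          nlinarith
        calc DE s ≤ Cc D p δ * (s / tstar) ^ δ * E s / s := h2
          _ = Cc D p δ / s * (s / tstar) ^ δ * E s := by ring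
    have hht : ∀ s, 0 ≤ s → 0 ≤ h s := by
      intro s hs
      have : (0:ℝ) ≤ (s / tstar) ^ δ := Real.rpow_nonneg (by positivity) _
      have : (0:ℝ) ≤ Cc D p δ / δ := by positivity
      rw [hhdef]
      positivity
    have hhts : h tstar = Cc D p δ / δ := by
      rw [hhdef]
      simp only
      rw [div_self (ne_of_gt htstar0), Real.one_rpow, mul_one]
    have hhle : ∀ s ∈ Set.Icc t tstar, h s ≤ Cc D p δ / δ := by
      intro s hs
      have hs0 : 0 < s := lt_of_lt_of_le ht0 hs.1
      have hx0 : 0 < s / tstar := div_pos hs0 htstar0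
      have hx1 : s / tstar ≤ 1 := (div_le_one htstar0).2 hs.2
      have h1 : (s / tstar) ^ δ ≤ 1 := by
        calc (s / tstar) ^ δ ≤ 1 ^ δ := Real.rpow_le_rpow hx0.le hx1 hδ.le
          _ = 1 := Real.one_rpow _
      have h2 : (0:ℝ) ≤ Cc D p δ / δ := by positivity
      calc h s = Cc D p δ / δ * (s / tstar) ^ δ := rfl
        _ ≤ Cc D p δ / δ * 1 := mul_le_mul_of_nonneg_left h1 h2
        _ = Cc D p δ / δ := mul_one _
    -- monotone function Φ = E * exp h
    have hconv : Convex ℝ (Set.Icc t tstar) := convex_Icc _ _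
    have hΦd : ∀ s ∈ Set.Icc t tstar, HasDerivAt (fun u => E u * Real.exp (h u))
        (DE s * Real.exp (h s) + E s * (Real.exp (h s) * (Cc D p δ / s * (s / tstar) ^ δ))) s := by
      intro s hs
      have hs0 : 0 < s := lt_of_lt_of_le ht0 hs.1
      exact (hEd s hs).mul ((hgd s hs0).exp)
    have hΨd : ∀ s ∈ Set.Icc t tstar, HasDerivAt (fun u => E u * Real.exp (-h u))
        (DE s * Real.exp (-h s) + E s * (Real.exp (-h s) * -(Cc D p δ / s * (s / tstar) ^ δ))) s := by
      intro s hs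
      have hs0 : 0 < s := lt_of_lt_of_le ht0 hs.1
      exact (hEd s hs).mul (((hgd s hs0).neg).exp)
    have hΦmono : MonotoneOn (fun u => E u * Real.exp (h u)) (Set.Icc t tstar) := by
      apply monotoneOn_of_deriv_nonneg hconv
      · intro s hs
        exact ((hΦd s hs).continuousAt).continuousWithinAt
      · intro s hs
        rw [interior_Icc] at hs
        exact ((hΦd s (Set.Ioo_subset_Icc_self hs)).differentiableAt).differentiableWithinAt
      · intro s hs
        rw [interior_Icc] at hs
        have hs' := Set.Ioo_subset_Icc_self hs
        rw [(hΦd s hs').deriv]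
        have hb := (hDEbd s hs').1
        have he : (0:ℝ) < Real.exp (h s) := Real.exp_pos _
        nlinarith [hE0 s]
    have hΨanti : AntitoneOn (fun u => E u * Real.exp (-h u)) (Set.Icc t tstar) := by
      apply antitoneOn_of_deriv_nonpos hconv
      · intro s hs
        exact ((hΨd s hs).continuousAt).continuousWithinAt
      · intro s hs
        rw [interior_Icc] at hs
        exact ((hΨd s (Set.Ioo_subset_Icc_self hs)).differentiableAt).differentiableWithinAt
      · intro s hs
        rw [interior_Icc] at hs
        have hs' := Set.Ioo_subset_Icc_self hs
        rw [(hΨd s hs').deriv]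
        have hb := (hDEbd s hs').2
        have he : (0:ℝ) < Real.exp (-h s) := Real.exp_pos _
        nlinarith [hE0 s]
    have htmem : t ∈ Set.Icc t tstar := ⟨le_refl t, hts⟩
    have hsmem : tstar ∈ Set.Icc t tstar := ⟨hts, le_refl tstar⟩
    have hΦle := hΦmono htmem hsmem hts
    have hΨge := hΨanti htmem hsmem hts
    simp only at hΦle hΨge
    constructor
    · -- Clow⁻¹ * E t ≤ E tstar
      rw [← Real.exp_neg]
      have h1 : E t ≤ E t * Real.exp (h t) := by
        nlinarith [Real.one_le_exp (hht t ht0.le), hE0 t]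
      have h2 : E t * Real.exp (h t) ≤ E tstar * Real.exp (Cc D p δ / δ) := by
        rw [← hhts]
        exact hΦle
      have h3 : Real.exp (-(Cc D p δ / δ)) * E t ≤
          Real.exp (-(Cc D p δ / δ)) * (E tstar * Real.exp (Cc D p δ / δ)) := by
        apply mul_le_mul_of_nonneg_left _ (Real.exp_pos _).le
        linarith
      calc Real.exp (-(Cc D p δ / δ)) * E t
          ≤ Real.exp (-(Cc D p δ / δ)) * (E tstar * Real.exp (Cc D p δ / δ)) := h3
        _ = E tstar * (Real.exp (-(Cc D p δ / δ)) * Real.exp (Cc D p δ / δ)) := by ring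
        _ = E tstar := by rw [← Real.exp_add]; simp
    · -- E tstar ≤ Clow * E t
      have h1 : E tstar * Real.exp (-(Cc D p δ / δ)) ≤ E t * Real.exp (-h t) := by
        rw [← hhts]
        exact hΨge
      have h2 : E t * Real.exp (-h t) ≤ E t := by
        have hle1 : Real.exp (-h t) ≤ 1 := by
          rw [Real.exp_le_one_iff]
          linarith [hht t ht0.le]
        nlinarith [hE0 t]
      have h3 : E tstar * Real.exp (-(Cc D p δ / δ)) ≤ E t := le_trans h1 h2
      have h4 : Real.exp (Cc D p δ / δ) * (E tstar * Real.exp (-(Cc D p δ / δ)))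
          ≤ Real.exp (Cc D p δ / δ) * E t := by
        apply mul_le_mul_of_nonneg_left h3 (Real.exp_pos _).le
      calc E tstar = Real.exp (Cc D p δ / δ) * (E tstar * Real.exp (-(Cc D p δ / δ))) := by
            rw [show Real.exp (Cc D p δ / δ) * (E tstar * Real.exp (-(Cc D p δ / δ)))
              = E tstar * (Real.exp (Cc D p δ / δ) * Real.exp (-(Cc D p δ / δ))) from by ring,
              ← Real.exp_add]
            simp
        _ ≤ Real.exp (Cc D p δ / δ) * E t := h4
end
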